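/- arXiv:1806.06966 — 3 statements merged into one kernel-verified Lean document; each statement's English description precedes it below -/
import Mathlib

section
/- If G is a graph in which every connected component has at most k vertices, then G is proportionally k-choosable; i.e., χ_pc(G) ≤ k. -/
open Finset

/-- The multiplicity of a color `c` in a list assignment `L`: the number of
vertices whose list contains `c`. -/
def eta {V : Type*} [Fintype V] (L : V → Finset ℕ) (c : ℕ) : ℕ :=
  (Finset.univ.filter fun v => c ∈ L v).card

/-- `f` is a proportional `L`-coloring of `G` (with lists of size `k`): a proper
`L`-coloring in which each color `c` of the palette is used `⌊η(c)/k⌋` or `⌈η(c)/k⌉` times. -/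
def IsProportionalColoring {V : Type*} [Fintype V] (G : SimpleGraph V) (k : ℕ)
    (L : V → Finset ℕ) (f : V → ℕ) : Prop :=
  (∀ v, f v ∈ L v) ∧ (∀ u v, G.Adj u v → f u ≠ f v) ∧
  ∀ c, (∃ v, c ∈ L v) →
    (Finset.univ.filter fun v => f v = c).card = eta L c / k ∨
    (Finset.univ.filter fun v => f v = c).card = (eta L c + k - 1) / k

/-- `G` is proportionally `k`-choosable: every `k`-assignment admits a proportional coloring. -/
def ProportionallyChoosable {V : Type*} [Fintype V] (G : SimpleGraph V) (k : ℕ) : Prop :=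
  ∀ L : V → Finset ℕ, (∀ v, (L v).card = k) → ∃ f : V → ℕ, IsProportionalColoring G k L f

set_option linter.unusedSectionVars false

lemma ceilDiv_eq (k n : ℕ) (hk : 0 < k) :
    (n + k - 1) / k = n / k + (if n % k = 0 then 0 else 1) := by
  have hdm : (n / k) * k + n % k = n := Nat.div_add_mod' n k
  have hr : n % k < k := Nat.mod_lt _ hk
  by_cases h : n % k = 0
  · simp only [h, if_pos]
    have h2 : n + k - 1 = (k - 1) + (n / k) * k := by omega
    rw [h2, Nat.add_mul_div_right _ _ hk, Nat.div_eq_of_lt (by omega)]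
    omega
  · simp only [h, if_neg, if_false]
    have h2 : n + k - 1 = (n % k - 1) + (n / k + 1) * k := by
      have : (n / k + 1) * k = n / k * k + k := by ring
      omega
    rw [h2, Nat.add_mul_div_right _ _ hk, Nat.div_eq_of_lt (by omega)]
    omega

namespace S17

open scoped Classical

variable {V : Type*} [Fintype V] (G : SimpleGraph V) (k : ℕ) (L : V → Finset ℕ)

noncomputable abbrev cp (v : V) : G.ConnectedComponent := G.connectedComponentMk v

noncomputable def Cols : Finset ℕ := univ.biUnion L

noncomputable def Fc (c : ℕ) : ℕ := eta L c / k

noncomputable def Ec (c : ℕ) : ℕ := (eta L c + k - 1) / k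

noncomputable def fib (C : G.ConnectedComponent) : Finset V := univ.filter fun v => cp G v = C

noncomputable def UC (C : G.ConnectedComponent) : Finset ℕ := (fib G C).biUnion L

noncomputable def dd (c : ℕ) : ℕ := ((univ.filter fun v => c ∈ L v).image (cp G)).card

noncomputable def sF : ℕ := Fintype.card V - ∑ c ∈ Cols L, Fc k L c

noncomputable def pp : ℕ := (Cols L |>.filter fun c => eta L c % k ≠ 0).card

noncomputable def w (c : ℕ) : ℕ := (dd G L c - Ec k L c) + (if eta L c % k = 0 then 0 else 1)

noncomputable def comps : Finset (G.ConnectedComponent) := univ.image (cp G)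

abbrev LeftT (V : Type*) := V ⊕ (ℕ × ℕ)

abbrev RightT (V : Type*) (G : SimpleGraph V) := (G.ConnectedComponent × ℕ) ⊕ (ℕ ⊕ (ℕ × ℕ))

noncomputable def PairsC (c : ℕ) : Finset (RightT V G) :=
  ((univ.filter fun v => c ∈ L v).image (cp G)).image fun C => Sum.inl (C, c)

noncomputable def Parks : Finset (RightT V G) :=
  (range (sF k L)).image fun j => Sum.inr (Sum.inl j)

noncomputable def nbhd : LeftT V → Finset (RightT V G)
  | .inl v => (L v).image fun c => Sum.inl (cp G v, c)
  | .inr p =>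
    if p.1 ∈ Cols L ∧ p.2 < w G k L p.1 then
      PairsC G L p.1 ∪
        (if dd G L p.1 - Ec k L p.1 ≤ p.2 then Parks G k L else ∅)
    else {Sum.inr (Sum.inr p)}

lemma nbhd_inl (v : V) :
    nbhd G k L (Sum.inl v) = (L v).image fun c => Sum.inl (cp G v, c) := rfl

lemma nbhd_inr (p : ℕ × ℕ) :
    nbhd G k L (Sum.inr p) =
      if p.1 ∈ Cols L ∧ p.2 < w G k L p.1 then
        PairsC G L p.1 ∪
          (if dd G L p.1 - Ec k L p.1 ≤ p.2 then Parks G k L else ∅)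
      else {Sum.inr (Sum.inr p)} := rfl

lemma nbhd_inr' (c i : ℕ) :
    nbhd G k L (Sum.inr (c, i)) =
      if c ∈ Cols L ∧ i < w G k L c then
        PairsC G L c ∪
          (if dd G L c - Ec k L c ≤ i then Parks G k L else ∅)
      else {Sum.inr (Sum.inr (c, i))} := rfl

section facts
variable (hk : 0 < k) (hL : ∀ v, (L v).card = k)
  (hsz : ∀ C : G.ConnectedComponent, (fib G C).card ≤ k)

lemma card_PairsC (c : ℕ) : (PairsC G L c).card = dd G L c := by
  rw [PairsC, card_image_of_injective, dd]
  intro a b h; simpa using h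

lemma card_Parks : (Parks G k L).card = sF k L := by
  rw [Parks, card_image_of_injective, card_range]
  intro a b h; simpa using h

include hk in
lemma hFr (c : ℕ) : k * Fc k L c + eta L c % k = eta L c := by
  rw [Fc, Nat.mul_comm]; exact Nat.div_add_mod' _ _

include hk in
lemma hrlt (c : ℕ) : eta L c % k < k := Nat.mod_lt _ hk

include hk in
lemma hEF (c : ℕ) : Ec k L c = Fc k L c + (if eta L c % k = 0 then 0 else 1) :=
  ceilDiv_eq k _ hk

include hk in
lemma heta_le_kE (c : ℕ) : eta L c ≤ k * Ec k L c := by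
  have h1 := hFr k L hk c
  have h2 := hrlt k L hk c
  have h3 := hEF k L hk c
  by_cases h : eta L c % k = 0 <;> simp [h] at h3 <;> rw [h3]
  · omega
  · have h5 : k * (Fc k L c + 1) = k * Fc k L c + k := by ring
    omega

include hsz in
lemma heta_le_kdd (c : ℕ) : eta L c ≤ k * dd G L c := by
  have h1 : eta L c = ∑ C ∈ (univ.filter fun v => c ∈ L v).image (cp G),
      ((univ.filter fun v => c ∈ L v).filter fun v => cp G v = C).card := by
    rw [eta]
    exact card_eq_sum_card_fiberwise fun x hx => mem_image_of_mem _ hx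
  rw [h1]
  calc ∑ C ∈ (univ.filter fun v => c ∈ L v).image (cp G),
        ((univ.filter fun v => c ∈ L v).filter fun v => cp G v = C).card
      ≤ ∑ _C ∈ (univ.filter fun v => c ∈ L v).image (cp G), k := by
        refine Finset.sum_le_sum fun C _ => ?_
        refine le_trans (Finset.card_le_card ?_) (hsz C)
        intro v hv
        simp only [fib, mem_filter, mem_univ, true_and]
        exact (mem_filter.mp hv).2
    _ = k * dd G L c := by rw [Finset.sum_const, dd, smul_eq_mul, Nat.mul_comm]

include hk hsz in
lemma hE_le_dd (c : ℕ) : Ec k L c ≤ dd G L c := by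
  have h1 := heta_le_kdd G k L hsz c
  have h2 := hFr k L hk c
  have h3 := hrlt k L hk c
  have h4 := hEF k L hk c
  have h6 : k * (dd G L c + 1) = k * dd G L c + k := by ring
  have h5 : Fc k L c ≤ dd G L c := by
    by_contra h
    push_neg at h
    have : k * (dd G L c + 1) ≤ k * Fc k L c := Nat.mul_le_mul_left _ h
    omega
  by_cases h : eta L c % k = 0
  · simp [h] at h4; omega
  · simp [h] at h4
    by_contra hcon
    push_neg at hcon
    have he : Fc k L c = dd G L c := by omega
    have : k * Fc k L c = k * dd G L c := by rw [he]
    omega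

include hL in
lemma hsum_eta : ∑ c ∈ Cols L, eta L c = k * Fintype.card V := by
  have h1 : ∀ c, eta L c = ∑ v : V, if c ∈ L v then 1 else 0 := by
    intro c; rw [eta, Finset.card_filter]
  rw [Finset.sum_congr rfl fun c _ => h1 c, Finset.sum_comm]
  have h2 : ∀ v : V, (∑ c ∈ Cols L, if c ∈ L v then 1 else 0) = k := by
    intro v
    rw [← Finset.card_filter]
    have h3 : (Cols L).filter (fun c => c ∈ L v) = L v := by
      ext c
      simp only [Finset.mem_filter, Cols, Finset.mem_biUnion, Finset.mem_univ,
        true_and, and_iff_right_iff_imp]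
      exact fun hc => ⟨v, hc⟩
    rw [h3, hL v]
  rw [Finset.sum_congr rfl fun v _ => h2 v, Finset.sum_const, smul_eq_mul,
    Fintype.card, Nat.mul_comm]

include hk hL in
lemma hsum_F_sF : ∑ c ∈ Cols L, Fc k L c + sF k L = Fintype.card V := by
  have h1 : k * ∑ c ∈ Cols L, Fc k L c ≤ k * Fintype.card V := by
    rw [Finset.mul_sum, ← hsum_eta k L hL]
    exact Finset.sum_le_sum fun c _ => by
      have := hFr k L hk c; omega
  have h2 : ∑ c ∈ Cols L, Fc k L c ≤ Fintype.card V :=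
    Nat.le_of_mul_le_mul_left h1 hk
  rw [sF]; omega

include hk hL in
lemma hsum_r : ∑ c ∈ Cols L, eta L c % k = k * sF k L := by
  have h0 := hsum_F_sF k L hk hL
  have h1 : k * (∑ c ∈ Cols L, Fc k L c) + ∑ c ∈ Cols L, eta L c % k
      = k * Fintype.card V := by
    rw [← hsum_eta k L hL, Finset.mul_sum, ← Finset.sum_add_distrib]
    exact Finset.sum_congr rfl fun c _ => hFr k L hk c
  have h2 : k * Fintype.card V = k * ∑ c ∈ Cols L, Fc k L c + k * sF k L := by
    rw [← Nat.mul_add, h0]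
  omega

include hk in
lemma hsum_E : ∑ c ∈ Cols L, Ec k L c = ∑ c ∈ Cols L, Fc k L c + pp k L := by
  have h1 : ∀ c ∈ Cols L, Ec k L c = Fc k L c + (if eta L c % k = 0 then 0 else 1) :=
    fun c _ => hEF k L hk c
  rw [Finset.sum_congr rfl h1, Finset.sum_add_distrib]
  congr 1
  rw [pp, Finset.sum_ite, Finset.sum_const_zero, Finset.sum_const, smul_eq_mul,
    Nat.zero_add, Nat.mul_one]

include hk in
lemma hE_pos {c : ℕ} (hc : c ∈ Cols L) : 1 ≤ Ec k L c := by
  obtain ⟨v, -, hv⟩ := Finset.mem_biUnion.mp hc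
  have h1 : 1 ≤ eta L c := by
    rw [eta, Nat.one_le_iff_ne_zero, ← Nat.pos_iff_ne_zero, Finset.card_pos]
    exact ⟨v, Finset.mem_filter.mpr ⟨Finset.mem_univ _, hv⟩⟩
  rw [Ec, Nat.one_le_div_iff hk]; omega

end facts




section hall
variable (hk : 0 < k) (hL : ∀ v, (L v).card = k)
  (hsz : ∀ C : G.ConnectedComponent, (fib G C).card ≤ k)

include hk hL hsz in
lemma hall_cond (A : Finset (LeftT V)) : A.card ≤ (A.biUnion (nbhd G k L)).card := by
  classical
  obtain ⟨W, R, hWmem, hRmem, hcardA⟩ :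
      ∃ (W : Finset V) (R : Finset (ℕ × ℕ)),
        (∀ v, v ∈ W ↔ (Sum.inl v : LeftT V) ∈ A) ∧
        (∀ p, p ∈ R ↔ (Sum.inr p : LeftT V) ∈ A) ∧
        A.card = W.card + R.card :=
    ⟨A.toLeft, A.toRight, fun v => Finset.mem_toLeft, fun p => Finset.mem_toRight,
      (Finset.card_toLeft_add_card_toRight (u := A)).symm⟩
  set valid : ℕ × ℕ → Prop := fun p => p.1 ∈ Cols L ∧ p.2 < w G k L p.1 with hvalid
  set Sp : Finset (ℕ × ℕ) := R.filter valid with hSp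
  set RJ : Finset (ℕ × ℕ) := R.filter (fun p => ¬ valid p) with hRJ
  have hcardR : R.card = Sp.card + RJ.card :=
    (Finset.card_filter_add_card_filter_not (p := valid)).symm
  set K : Finset ℕ := Sp.image Prod.fst with hK
  set Kf : Finset ℕ := (Sp.filter fun p => dd G L p.1 - Ec k L p.1 ≤ p.2).image Prod.fst
    with hKf
  have hKfK : Kf ⊆ K := Finset.image_subset_image (Finset.filter_subset _ _)
  have hKCols : ∀ c ∈ K, c ∈ Cols L := by
    intro c hc
    obtain ⟨p, hp, rfl⟩ := Finset.mem_image.mp hc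
    exact ((Finset.mem_filter.mp hp).2).1
  have hKfr : ∀ c ∈ Kf, eta L c % k ≠ 0 := by
    intro c hc
    obtain ⟨p, hp, rfl⟩ := Finset.mem_image.mp hc
    obtain ⟨hp1, hp2⟩ := Finset.mem_filter.mp hp
    obtain ⟨-, -, hp3⟩ := Finset.mem_filter.mp hp1
    intro h0
    rw [w, h0] at hp3
    simp only [if_pos] at hp3
    omega
  -- (i) size bound for Sp
  have hSpBound : Sp.card ≤ (∑ c ∈ K, (dd G L c - Ec k L c)) + Kf.card := by
    have h1 : Sp.card = ∑ c ∈ K, (Sp.filter fun p => p.1 = c).card :=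
      Finset.card_eq_sum_card_fiberwise fun p hp => Finset.mem_image_of_mem _ hp
    have h2 : ∀ c ∈ K, (Sp.filter fun p => p.1 = c).card
        ≤ (dd G L c - Ec k L c) + (if c ∈ Kf then 1 else 0) := by
      intro c hc
      have hinj : Set.InjOn (fun p : ℕ × ℕ => p.2)
          ((Sp.filter fun p => p.1 = c) : Finset (ℕ × ℕ)) := by
        intro p hp q hq h
        have hp1 := (Finset.mem_filter.mp hp).2
        have hq1 := (Finset.mem_filter.mp hq).2
        exact Prod.ext (hp1.trans hq1.symm) h
      by_cases hcf : c ∈ Kf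
      · simp only [hcf, if_pos]
        calc (Sp.filter fun p => p.1 = c).card
            ≤ (Finset.range (dd G L c - Ec k L c + 1)).card := by
              refine Finset.card_le_card_of_injOn _ ?_ hinj
              intro p hp
              obtain ⟨hp1, hp2⟩ := Finset.mem_filter.mp hp
              obtain ⟨-, -, hp3⟩ := Finset.mem_filter.mp hp1
              have hr : eta L c % k ≠ 0 := hKfr c hcf
              simp only [Finset.mem_coe, Finset.mem_range]
              rw [hp2] at hp3
              rw [w, if_neg hr] at hp3
              omega
          _ = dd G L c - Ec k L c + 1 := Finset.card_range _
      · simp only [hcf, if_neg, if_false, Nat.add_zero]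
        calc (Sp.filter fun p => p.1 = c).card
            ≤ (Finset.range (dd G L c - Ec k L c)).card := by
              refine Finset.card_le_card_of_injOn _ ?_ hinj
              intro p hp
              obtain ⟨hp1, hp2⟩ := Finset.mem_filter.mp hp
              simp only [Finset.mem_coe, Finset.mem_range]
              by_contra hcon
              push_neg at hcon
              exact hcf (Finset.mem_image.mpr ⟨p, Finset.mem_filter.mpr ⟨hp1, by rw [hp2]; omega⟩, hp2⟩)
          _ = dd G L c - Ec k L c := Finset.card_range _
    calc Sp.card = ∑ c ∈ K, (Sp.filter fun p => p.1 = c).card := h1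
      _ ≤ ∑ c ∈ K, ((dd G L c - Ec k L c) + (if c ∈ Kf then 1 else 0)) :=
          Finset.sum_le_sum h2
      _ = (∑ c ∈ K, (dd G L c - Ec k L c)) + Kf.card := by
          rw [Finset.sum_add_distrib]
          congr 1
          rw [Finset.sum_ite_mem, Finset.inter_eq_right.mpr hKfK, Finset.card_eq_sum_ones]
  -- target sets
  set UWc : G.ConnectedComponent → Finset ℕ :=
    fun C => (W.filter fun v => cp G v = C).biUnion L with hUWc
  set X1 : Finset (RightT V G) := (comps G).biUnion fun C =>
    ((UC G L C ∩ K) ∪ UWc C).image fun c => Sum.inl (C, c) with hX1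
  set X2 : Finset (RightT V G) := if Kf.Nonempty then Parks G k L else ∅ with hX2
  set X3 : Finset (RightT V G) := RJ.image fun p => Sum.inr (Sum.inr p) with hX3
  have hXsub : X1 ∪ X2 ∪ X3 ⊆ A.biUnion (nbhd G k L) := by
    intro x hx
    rcases Finset.mem_union.mp hx with hx | hx3
    · rcases Finset.mem_union.mp hx with hx1 | hx2
      · -- X1
        obtain ⟨C, hC, hx⟩ := Finset.mem_biUnion.mp hx1
        obtain ⟨c, hc, rfl⟩ := Finset.mem_image.mp hx
        rcases Finset.mem_union.mp hc with hc | hc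
        · obtain ⟨hcU, hcK⟩ := Finset.mem_inter.mp hc
          obtain ⟨p, hp, hpc⟩ := Finset.mem_image.mp hcK
          obtain ⟨hpR, hpv⟩ := Finset.mem_filter.mp hp
          refine Finset.mem_biUnion.mpr ⟨Sum.inr p, (hRmem p).mp hpR, ?_⟩
          rw [nbhd_inr, if_pos hpv]
          refine Finset.mem_union_left _ ?_
          rw [hpc, PairsC]
          obtain ⟨v, hv, hvc⟩ := Finset.mem_biUnion.mp hcU
          refine Finset.mem_image.mpr ⟨C, Finset.mem_image.mpr ⟨v, ?_, ?_⟩, rfl⟩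
          · exact Finset.mem_filter.mpr ⟨Finset.mem_univ _, hvc⟩
          · exact (Finset.mem_filter.mp hv).2
        · obtain ⟨v, hv, hvc⟩ := Finset.mem_biUnion.mp hc
          obtain ⟨hvW, hvC⟩ := Finset.mem_filter.mp hv
          refine Finset.mem_biUnion.mpr ⟨Sum.inl v, (hWmem v).mp hvW, ?_⟩
          rw [nbhd_inl]
          exact Finset.mem_image.mpr ⟨c, hvc, by rw [hvC]⟩
      · -- X2
        rw [hX2] at hx2
        by_cases hne : Kf.Nonempty
        · rw [if_pos hne] at hx2
          obtain ⟨c, hc⟩ := hne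
          obtain ⟨p, hp, hpc⟩ := Finset.mem_image.mp hc
          obtain ⟨hp1, hp2⟩ := Finset.mem_filter.mp hp
          obtain ⟨hpR, hpv⟩ := Finset.mem_filter.mp hp1
          refine Finset.mem_biUnion.mpr ⟨Sum.inr p, (hRmem p).mp hpR, ?_⟩
          rw [nbhd_inr, if_pos hpv, if_pos hp2]
          exact Finset.mem_union_right _ hx2
        · rw [if_neg hne] at hx2
          exact absurd hx2 (Finset.notMem_empty x)
    · -- X3
      obtain ⟨p, hp, rfl⟩ := Finset.mem_image.mp hx3
      obtain ⟨hpR, hpv⟩ := Finset.mem_filter.mp hp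
      refine Finset.mem_biUnion.mpr ⟨Sum.inr p, (hRmem p).mp hpR, ?_⟩
      rw [nbhd_inr, if_neg hpv]
      exact Finset.mem_singleton_self _

  -- subset fact
  have hUWc_sub : ∀ C, UWc C ⊆ UC G L C := by
    intro C c hc
    obtain ⟨v, hv, hvc⟩ := Finset.mem_biUnion.mp hc
    obtain ⟨-, hv2⟩ := Finset.mem_filter.mp hv
    exact Finset.mem_biUnion.mpr ⟨v, Finset.mem_filter.mpr ⟨Finset.mem_univ _, hv2⟩, hvc⟩
  -- cardinality of X1
  have hX1card : X1.card = ∑ C ∈ comps G, ((UC G L C ∩ K) ∪ UWc C).card := by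
    rw [hX1, Finset.card_biUnion]
    · exact Finset.sum_congr rfl fun C _ =>
        Finset.card_image_of_injective _ (fun a b h => by
          simpa using congrArg (fun y : RightT V G =>
            y.elim (fun q => q.2) (fun _ => 0)) h)
    · intro C hC D hD hCD
      rw [Function.onFun, Finset.disjoint_left]
      rintro x hx1 hx2
      obtain ⟨c, -, rfl⟩ := Finset.mem_image.mp hx1
      obtain ⟨c', -, heq⟩ := Finset.mem_image.mp hx2
      apply hCD
      have := congrArg (fun y : RightT V G =>
        y.elim (fun q => some q.1) (fun _ => none)) heq
      simpa using this.symm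
  have hX2card : X2.card = if Kf.Nonempty then sF k L else 0 := by
    rw [hX2]
    by_cases h : Kf.Nonempty
    · rw [if_pos h, if_pos h, card_Parks]
    · rw [if_neg h, if_neg h, Finset.card_empty]
  have hX3card : X3.card = RJ.card := by
    rw [hX3]
    exact Finset.card_image_of_injective _ (fun a b h => by simpa using h)
  have hXcard : (X1 ∪ X2 ∪ X3).card = X1.card + X2.card + X3.card := by
    have d13 : Disjoint (X1 ∪ X2) X3 := by
      rw [Finset.disjoint_left]
      rintro x hx1 hx3
      obtain ⟨p, -, rfl⟩ := Finset.mem_image.mp hx3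
      rcases Finset.mem_union.mp hx1 with h | h
      · obtain ⟨C, -, hC⟩ := Finset.mem_biUnion.mp h
        obtain ⟨c, -, heq⟩ := Finset.mem_image.mp hC
        exact absurd heq (by simp)
      · rw [hX2] at h
        by_cases hne : Kf.Nonempty
        · rw [if_pos hne] at h
          obtain ⟨j, -, heq⟩ := Finset.mem_image.mp h
          exact absurd heq (by simp)
        · rw [if_neg hne] at h
          exact absurd h (Finset.notMem_empty _)
    have d12 : Disjoint X1 X2 := by
      rw [Finset.disjoint_left]
      rintro x hx1 hx2
      obtain ⟨C, -, hC⟩ := Finset.mem_biUnion.mp hx1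
      obtain ⟨c, -, rfl⟩ := Finset.mem_image.mp hC
      rw [hX2] at hx2
      by_cases hne : Kf.Nonempty
      · rw [if_pos hne] at hx2
        obtain ⟨j, -, heq⟩ := Finset.mem_image.mp hx2
        exact absurd heq (by simp)
      · rw [if_neg hne] at hx2
        exact absurd hx2 (Finset.notMem_empty _)
    rw [Finset.card_union_of_disjoint d13, Finset.card_union_of_disjoint d12]
  -- split per component
  have hsplit : ∀ C ∈ comps G,
      ((UC G L C ∩ K) ∪ UWc C).card = (UC G L C ∩ K).card + (UWc C \ K).card := by
    intro C _
    have h1 : (UC G L C ∩ K) ∪ UWc C = (UC G L C ∩ K) ∪ (UWc C \ K) := by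
      ext c
      simp only [Finset.mem_union, Finset.mem_inter, Finset.mem_sdiff]
      constructor
      · rintro (h | h)
        · exact Or.inl h
        · by_cases hcK : c ∈ K
          · exact Or.inl ⟨hUWc_sub C h, hcK⟩
          · exact Or.inr ⟨h, hcK⟩
      · rintro (h | h)
        · exact Or.inl h
        · exact Or.inr h.1
    rw [h1, Finset.card_union_of_disjoint]
    rw [Finset.disjoint_left]
    rintro c hc1 hc2
    exact (Finset.mem_sdiff.mp hc2).2 (Finset.mem_inter.mp hc1).2
  -- (iii)
  have hsum1 : ∑ C ∈ comps G, (UC G L C ∩ K).card = ∑ c ∈ K, dd G L c := by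
    have h1 : ∀ C, (UC G L C ∩ K).card = ∑ c ∈ K, if c ∈ UC G L C then 1 else 0 := by
      intro C
      rw [Finset.inter_comm, ← Finset.filter_mem_eq_inter, Finset.card_filter]
    rw [Finset.sum_congr rfl fun C _ => h1 C, Finset.sum_comm]
    refine Finset.sum_congr rfl fun c hc => ?_
    rw [← Finset.card_filter, dd]
    congr 1
    ext C
    constructor
    · intro hC
      obtain ⟨hC1, hC2⟩ := Finset.mem_filter.mp hC
      obtain ⟨u, hu, huc⟩ := Finset.mem_biUnion.mp hC2
      have hcu : cp G u = C := (Finset.mem_filter.mp hu).2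
      exact Finset.mem_image.mpr ⟨u, Finset.mem_filter.mpr ⟨Finset.mem_univ _, huc⟩, hcu⟩
    · intro hC
      obtain ⟨u, hu, hcu⟩ := Finset.mem_image.mp hC
      have huL : c ∈ L u := (Finset.mem_filter.mp hu).2
      refine Finset.mem_filter.mpr ⟨?_, ?_⟩
      · exact Finset.mem_image.mpr ⟨u, Finset.mem_univ _, hcu⟩
      · exact Finset.mem_biUnion.mpr
          ⟨u, Finset.mem_filter.mpr ⟨Finset.mem_univ _, hcu⟩, huL⟩
  -- (iv)
  have hsum2 : k * W.card ≤ (∑ c ∈ K, eta L c)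
      + k * ∑ C ∈ comps G, (UWc C \ K).card := by
    have h0 : W.card = ∑ C ∈ comps G, (W.filter fun v => cp G v = C).card :=
      Finset.card_eq_sum_card_fiberwise fun v _ =>
        Finset.mem_image_of_mem _ (Finset.mem_univ v)
    have hperC : ∀ C ∈ comps G, k * (W.filter fun v => cp G v = C).card ≤
        (∑ c ∈ K, ((W.filter fun v => cp G v = C).filter fun v => c ∈ L v).card)
          + k * (UWc C \ K).card := by
      intro C hC
      have h1 : k * (W.filter fun v => cp G v = C).card
          = ∑ v ∈ W.filter fun v => cp G v = C, (L v).card := by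
        rw [Finset.sum_congr rfl fun v _ => hL v, Finset.sum_const, smul_eq_mul,
          Nat.mul_comm]
      have h2 : ∀ v ∈ W.filter fun v => cp G v = C,
          (L v).card = (L v ∩ K).card + (L v \ K).card :=
        fun v _ => (Finset.card_inter_add_card_sdiff _ _).symm
      have h3 : ∑ v ∈ W.filter fun v => cp G v = C, (L v ∩ K).card
          = ∑ c ∈ K, ((W.filter fun v => cp G v = C).filter fun v => c ∈ L v).card := by
        have e0 : ∀ v, (L v ∩ K).card = ∑ c ∈ K, if c ∈ L v then 1 else 0 := by
          intro v
          rw [Finset.inter_comm, ← Finset.filter_mem_eq_inter, Finset.card_filter]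
        rw [Finset.sum_congr rfl fun v _ => e0 v, Finset.sum_comm]
        exact Finset.sum_congr rfl fun c _ => (Finset.card_filter _ _).symm
      have h4 : ∀ v ∈ W.filter fun v => cp G v = C,
          (L v \ K).card ≤ ((UWc C \ K).filter fun c => c ∈ L v).card := by
        intro v hv
        apply Finset.card_le_card
        intro c hc
        obtain ⟨hc1, hc2⟩ := Finset.mem_sdiff.mp hc
        exact Finset.mem_filter.mpr
          ⟨Finset.mem_sdiff.mpr ⟨Finset.mem_biUnion.mpr ⟨v, hv, hc1⟩, hc2⟩, hc1⟩
      have h5 : ∑ v ∈ W.filter fun v => cp G v = C,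
          ((UWc C \ K).filter fun c => c ∈ L v).card
          = ∑ c ∈ UWc C \ K,
              ((W.filter fun v => cp G v = C).filter fun v => c ∈ L v).card := by
        rw [Finset.sum_congr rfl fun v _ => Finset.card_filter _ _, Finset.sum_comm]
        exact Finset.sum_congr rfl fun c _ => (Finset.card_filter _ _).symm
      have h6 : ∀ c ∈ UWc C \ K,
          ((W.filter fun v => cp G v = C).filter fun v => c ∈ L v).card ≤ k := by
        intro c _
        refine le_trans (Finset.card_le_card ?_) (hsz C)
        intro v hv
        obtain ⟨hv1, -⟩ := Finset.mem_filter.mp hv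
        obtain ⟨-, hv2⟩ := Finset.mem_filter.mp hv1
        exact Finset.mem_filter.mpr ⟨Finset.mem_univ _, hv2⟩
      calc k * (W.filter fun v => cp G v = C).card
          = ∑ v ∈ W.filter fun v => cp G v = C, ((L v ∩ K).card + (L v \ K).card) := by
            rw [h1]; exact Finset.sum_congr rfl h2
        _ = (∑ v ∈ W.filter fun v => cp G v = C, (L v ∩ K).card)
            + ∑ v ∈ W.filter fun v => cp G v = C, (L v \ K).card :=
            Finset.sum_add_distrib
        _ ≤ (∑ c ∈ K, ((W.filter fun v => cp G v = C).filter fun v => c ∈ L v).card)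
            + ∑ c ∈ UWc C \ K,
                ((W.filter fun v => cp G v = C).filter fun v => c ∈ L v).card := by
            rw [h3]
            exact Nat.add_le_add_left
              (le_trans (Finset.sum_le_sum h4) (le_of_eq h5)) _
        _ ≤ _ := by
            refine Nat.add_le_add_left ?_ _
            calc ∑ c ∈ UWc C \ K,
                  ((W.filter fun v => cp G v = C).filter fun v => c ∈ L v).card
                ≤ ∑ _c ∈ UWc C \ K, k := Finset.sum_le_sum h6
              _ = k * (UWc C \ K).card := by
                  rw [Finset.sum_const, smul_eq_mul, Nat.mul_comm]
    have h7 : ∀ c ∈ K, ∑ C ∈ comps G,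
        ((W.filter fun v => cp G v = C).filter fun v => c ∈ L v).card ≤ eta L c := by
      intro c _
      have e1 : ∀ C, ((W.filter fun v => cp G v = C).filter fun v => c ∈ L v)
          = ((W.filter fun v => c ∈ L v).filter fun v => cp G v = C) := by
        intro C
        rw [Finset.filter_filter, Finset.filter_filter]
        exact Finset.filter_congr fun v _ => by rw [and_comm]
      rw [Finset.sum_congr rfl fun C _ => by rw [e1 C]]
      rw [show comps G = univ.image (cp G) from rfl]
      rw [← Finset.card_eq_sum_card_fiberwise
        (fun v _ => Finset.mem_image_of_mem (cp G) (Finset.mem_univ v))]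
      rw [eta]
      exact Finset.card_le_card fun v hv =>
        Finset.mem_filter.mpr ⟨Finset.mem_univ _, (Finset.mem_filter.mp hv).2⟩
    calc k * W.card = ∑ C ∈ comps G, k * (W.filter fun v => cp G v = C).card := by
          rw [h0, Finset.mul_sum]
      _ ≤ ∑ C ∈ comps G,
            ((∑ c ∈ K, ((W.filter fun v => cp G v = C).filter fun v => c ∈ L v).card)
              + k * (UWc C \ K).card) := Finset.sum_le_sum hperC
      _ = (∑ C ∈ comps G, ∑ c ∈ K,
            ((W.filter fun v => cp G v = C).filter fun v => c ∈ L v).card)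
          + ∑ C ∈ comps G, k * (UWc C \ K).card := Finset.sum_add_distrib
      _ = (∑ c ∈ K, ∑ C ∈ comps G,
            ((W.filter fun v => cp G v = C).filter fun v => c ∈ L v).card)
          + k * ∑ C ∈ comps G, (UWc C \ K).card := by
          rw [Finset.sum_comm, ← Finset.mul_sum]
      _ ≤ _ := Nat.add_le_add_right (Finset.sum_le_sum h7) _
  -- (v)
  have hsum3 : k * Kf.card ≤ (∑ c ∈ K, (k * Ec k L c - eta L c))
      + (if Kf.Nonempty then k * sF k L else 0) := by
    by_cases hne : Kf.Nonempty
    · rw [if_pos hne]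
      have h1 : ∀ c ∈ Kf, k = (k * Ec k L c - eta L c) + eta L c % k := by
        intro c hc
        have hr := hKfr c hc
        have hEFc := hEF k L hk c
        rw [if_neg hr] at hEFc
        have h2 : k * Ec k L c = k * Fc k L c + k := by
          rw [hEFc, Nat.mul_add, Nat.mul_one]
        have h3 := hFr k L hk c
        have h4 := hrlt k L hk c
        omega
      calc k * Kf.card = ∑ _c ∈ Kf, k := by
            rw [Finset.sum_const, smul_eq_mul, Nat.mul_comm]
        _ = ∑ c ∈ Kf, ((k * Ec k L c - eta L c) + eta L c % k) :=
            Finset.sum_congr rfl h1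
        _ = (∑ c ∈ Kf, (k * Ec k L c - eta L c)) + ∑ c ∈ Kf, eta L c % k :=
            Finset.sum_add_distrib
        _ ≤ (∑ c ∈ K, (k * Ec k L c - eta L c)) + ∑ c ∈ Cols L, eta L c % k :=
            Nat.add_le_add
              (Finset.sum_le_sum_of_subset hKfK)
              (Finset.sum_le_sum_of_subset fun c hc => hKCols c (hKfK hc))
        _ = _ := by rw [hsum_r k L hk hL]
    · rw [if_neg hne]
      rw [Finset.not_nonempty_iff_eq_empty] at hne
      simp [hne]
  -- combine per-color identity
  have hKdd_sum : (∑ c ∈ K, eta L c) + k * (∑ c ∈ K, (dd G L c - Ec k L c))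
      + (∑ c ∈ K, (k * Ec k L c - eta L c)) = k * ∑ c ∈ K, dd G L c := by
    rw [Finset.mul_sum, Finset.mul_sum, ← Finset.sum_add_distrib, ← Finset.sum_add_distrib]
    refine Finset.sum_congr rfl fun c hc => ?_
    have h1 := hE_le_dd G k L hk hsz c
    have h2 := heta_le_kE k L hk c
    have h3 := heta_le_kdd G k L hsz c
    have h4 : k * (dd G L c - Ec k L c) = k * dd G L c - k * Ec k L c :=
      Nat.mul_sub k _ _
    have h5 : k * Ec k L c ≤ k * dd G L c := Nat.mul_le_mul_left k h1
    omega
  -- final assembly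
  have H1 : k * A.card = k * W.card + k * Sp.card + k * RJ.card := by
    rw [hcardA, hcardR, Nat.mul_add, Nat.mul_add]
    omega
  have H3 : k * Sp.card ≤ k * (∑ c ∈ K, (dd G L c - Ec k L c)) + k * Kf.card := by
    have := Nat.mul_le_mul_left k hSpBound
    rwa [Nat.mul_add] at this
  have H6 : k * (X1 ∪ X2 ∪ X3).card = k * (∑ c ∈ K, dd G L c)
      + k * (∑ C ∈ comps G, (UWc C \ K).card)
      + (if Kf.Nonempty then k * sF k L else 0) + k * RJ.card := by
    rw [hXcard, hX1card, Finset.sum_congr rfl hsplit, Finset.sum_add_distrib, hsum1,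
      hX2card, hX3card, Nat.mul_add, Nat.mul_add, Nat.mul_add]
    congr 1
    by_cases h : Kf.Nonempty <;> simp [h]
  have key : k * A.card ≤ k * (X1 ∪ X2 ∪ X3).card := by
    rw [H1, H6]
    have := hsum2
    have := hsum3
    have := hKdd_sum
    have := H3
    linarith
  have hfin : A.card ≤ (X1 ∪ X2 ∪ X3).card := Nat.le_of_mul_le_mul_left key hk
  exact le_trans hfin (Finset.card_le_card hXsub)

end hall


section main
variable (hk : 0 < k) (hL : ∀ v, (L v).card = k)
  (hsz : ∀ C : G.ConnectedComponent, (fib G C).card ≤ k)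

include hk hL hsz in
lemma main : ∃ f : V → ℕ,
    (∀ v, f v ∈ L v) ∧ (∀ u v, G.Adj u v → f u ≠ f v) ∧
    ∀ c, (∃ v, c ∈ L v) →
      (Finset.univ.filter fun v => f v = c).card = eta L c / k ∨
      (Finset.univ.filter fun v => f v = c).card = (eta L c + k - 1) / k := by
  classical
  obtain ⟨g, hginj, hgmem⟩ :=
    (Finset.all_card_le_biUnion_card_iff_exists_injective (nbhd G k L)).mp
      (hall_cond G k L hk hL hsz)
  have hfv : ∀ v : V, ∃ c, c ∈ L v ∧ g (Sum.inl v) = Sum.inl (cp G v, c) := by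
    intro v
    have h := hgmem (Sum.inl v)
    rw [nbhd_inl] at h
    obtain ⟨c, hc, hgc⟩ := Finset.mem_image.mp h
    exact ⟨c, hc, hgc.symm⟩
  set f : V → ℕ := fun v => (hfv v).choose with hfdef
  have hfL : ∀ v, f v ∈ L v := fun v => (hfv v).choose_spec.1
  have hfg : ∀ v, g (Sum.inl v) = Sum.inl (cp G v, f v) := fun v => (hfv v).choose_spec.2
  have hfCols : ∀ v, f v ∈ Cols L := fun v =>
    Finset.mem_biUnion.mpr ⟨v, Finset.mem_univ _, hfL v⟩
  -- definition of φ
  set φ : ℕ → ℕ := fun c =>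
    if h : c ∈ Cols L ∧ eta L c % k ≠ 0 then
      (if (g (Sum.inr (c, dd G L c - Ec k L c))).isLeft then 1 else 0)
    else 0 with hφdef
  have hφ01 : ∀ c, φ c = 0 ∨ φ c = 1 := by
    intro c
    simp only [hφdef]
    split_ifs <;> simp
  have hφr0 : ∀ c, eta L c % k = 0 → φ c = 0 := by
    intro c h
    simp only [hφdef]
    split_ifs with h1 h2
    · exact absurd h h1.2
    · exact absurd h h1.2
    · rfl
  have hwfil : ∀ c, eta L c % k ≠ 0 → w G k L c = dd G L c - Ec k L c + 1 := by
    intro c h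
    rw [w, if_neg h]
  have hφ1 : ∀ c, φ c = 1 →
      (g (Sum.inr (c, dd G L c - Ec k L c))).isLeft = true := by
    intro c h
    simp only [hφdef] at h
    split_ifs at h with h1 h2
    · exact h2
  have hfil_mem : ∀ c ∈ Cols L, eta L c % k ≠ 0 →
      g (Sum.inr (c, dd G L c - Ec k L c)) ∈ PairsC G L c ∪ Parks G k L := by
    intro c hc hr
    have h := hgmem (Sum.inr (c, dd G L c - Ec k L c))
    rw [nbhd_inr', if_pos ⟨hc, by rw [hwfil c hr]; omega⟩, if_pos le_rfl] at h
    exact h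
  have hφpark : ∀ c ∈ Cols L, eta L c % k ≠ 0 → φ c = 0 →
      g (Sum.inr (c, dd G L c - Ec k L c)) ∈ Parks G k L := by
    intro c hc hr h0
    have h := hfil_mem c hc hr
    rcases Finset.mem_union.mp h with h | h
    · exfalso
      obtain ⟨C, -, heq⟩ := Finset.mem_image.mp h
      have : (g (Sum.inr (c, dd G L c - Ec k L c))).isLeft = true := by
        rw [← heq]; rfl
      simp only [hφdef] at h0
      rw [dif_pos ⟨hc, hr⟩, this, if_pos rfl] at h0
      exact absurd h0 one_ne_zero
    · exact h
  -- Claim A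
  have claimA : ∀ c ∈ Cols L,
      (univ.filter fun v => f v = c).card + ((dd G L c - Ec k L c) + φ c)
        ≤ dd G L c := by
    intro c hc
    set T1 : Finset (LeftT V) := (univ.filter fun v => f v = c).image Sum.inl with hT1
    set T2 : Finset (LeftT V) :=
      (range (dd G L c - Ec k L c)).image fun i => Sum.inr (c, i) with hT2
    set T3 : Finset (LeftT V) :=
      if φ c = 1 then {Sum.inr (c, dd G L c - Ec k L c)} else ∅ with hT3
    have hT1card : T1.card = (univ.filter fun v => f v = c).card :=
      Finset.card_image_of_injective _ Sum.inl_injective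
    have hT2card : T2.card = dd G L c - Ec k L c := by
      rw [hT2, Finset.card_image_of_injective _ (fun a b h => by simpa using h),
        Finset.card_range]
    have hT3card : T3.card = φ c := by
      rcases hφ01 c with h | h
      · rw [hT3, if_neg (by omega), h, Finset.card_empty]
      · rw [hT3, if_pos h, h, Finset.card_singleton]
    have hmap : ∀ x ∈ T1 ∪ T2 ∪ T3, g x ∈ PairsC G L c := by
      intro x hx
      rcases Finset.mem_union.mp hx with hx' | hx3
      · rcases Finset.mem_union.mp hx' with hx1 | hx2
        · obtain ⟨v, hv, rfl⟩ := Finset.mem_image.mp hx1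
          have hvc : f v = c := (Finset.mem_filter.mp hv).2
          rw [hfg v, ]
          rw [PairsC]
          refine Finset.mem_image.mpr ⟨cp G v, ?_, by rw [hvc]⟩
          refine Finset.mem_image.mpr ⟨v, ?_, rfl⟩
          exact Finset.mem_filter.mpr ⟨Finset.mem_univ _, hvc ▸ hfL v⟩
        · obtain ⟨i, hi, rfl⟩ := Finset.mem_image.mp hx2
          rw [Finset.mem_range] at hi
          have h := hgmem (Sum.inr (c, i))
          have hvalid : c ∈ Cols L ∧ i < w G k L c := ⟨hc, by rw [w]; omega⟩
          rw [nbhd_inr', if_pos hvalid, if_neg (by omega : ¬ (dd G L c - Ec k L c ≤ i))] at h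
          simpa using h
      · have hφ1c : φ c = 1 := by
          rcases hφ01 c with h | h
          · rw [hT3, if_neg (by omega)] at hx3
            exact absurd hx3 (Finset.notMem_empty _)
          · exact h
        rw [hT3, if_pos hφ1c, Finset.mem_singleton] at hx3
        subst hx3
        have hr : eta L c % k ≠ 0 := by
          intro h0
          rw [hφr0 c h0] at hφ1c
          exact absurd hφ1c zero_ne_one
        have h := hfil_mem c hc hr
        rcases Finset.mem_union.mp h with h | h
        · exact h
        · exfalso
          obtain ⟨j, -, heq⟩ := Finset.mem_image.mp h
          have h2 := hφ1 c hφ1c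
          rw [← heq] at h2
          simp at h2
    have hinj : Set.InjOn g ((T1 ∪ T2 ∪ T3) : Finset (LeftT V)) :=
      fun a _ b _ h => hginj h
    have hcard := Finset.card_le_card_of_injOn g hmap hinj
    rw [card_PairsC] at hcard
    have d12 : Disjoint T1 T2 := by
      rw [Finset.disjoint_left]
      rintro x hx1 hx2
      obtain ⟨v, -, rfl⟩ := Finset.mem_image.mp hx1
      obtain ⟨i, -, heq⟩ := Finset.mem_image.mp hx2
      exact absurd heq (by simp)
    have d123 : Disjoint (T1 ∪ T2) T3 := by
      rw [Finset.disjoint_left]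
      rintro x hx hx3
      have hφ1c : φ c = 1 := by
        rcases hφ01 c with h | h
        · rw [hT3, if_neg (by omega)] at hx3
          exact absurd hx3 (Finset.notMem_empty _)
        · exact h
      rw [hT3, if_pos hφ1c, Finset.mem_singleton] at hx3
      subst hx3
      rcases Finset.mem_union.mp hx with hx1 | hx2
      · obtain ⟨v, -, heq⟩ := Finset.mem_image.mp hx1
        exact absurd heq (by simp)
      · obtain ⟨i, hi, heq⟩ := Finset.mem_image.mp hx2
        rw [Finset.mem_range] at hi
        have : i = dd G L c - Ec k L c := by
          have := congrArg (fun y : LeftT V => y.elim (fun _ => 0) (fun p => p.2)) heq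
          simpa using this
        omega
    rw [Finset.card_union_of_disjoint d123, Finset.card_union_of_disjoint d12,
      hT1card, hT2card, hT3card] at hcard
    omega
  -- Claim B : parked fillers are few
  have claimB : ((Cols L).filter fun c => eta L c % k ≠ 0 ∧ φ c = 0).card ≤ sF k L := by
    have h := Finset.card_le_card_of_injOn
      (s := (Cols L).filter fun c => eta L c % k ≠ 0 ∧ φ c = 0)
      (t := Parks G k L)
      (fun c => g (Sum.inr (c, dd G L c - Ec k L c)))
      (fun c hc => by
        have h1 := (Finset.mem_filter.mp hc).1
        have h2 := (Finset.mem_filter.mp hc).2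
        exact hφpark c h1 h2.1 h2.2)
      (fun a _ b _ h => by
        have h2 := hginj h
        simpa using congrArg (fun y : LeftT V => y.elim (fun _ => 0) (fun p => p.1)) h2)
    rwa [card_Parks] at h
  -- total count
  have hnsum : ∑ c ∈ Cols L, (univ.filter fun v => f v = c).card = Fintype.card V := by
    rw [Fintype.card]
    exact (Finset.card_eq_sum_card_fiberwise fun v _ => hfCols v).symm
  have hnE : ∀ c ∈ Cols L,
      (univ.filter fun v => f v = c).card ≤ Ec k L c - φ c := by
    intro c hc
    have h1 := claimA c hc
    have h2 := hE_le_dd G k L hk hsz c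
    omega
  have hφ_le_E : ∀ c ∈ Cols L, φ c ≤ Ec k L c := by
    intro c hc
    have := hE_pos k L hk hc
    rcases hφ01 c with h | h <;> omega
  have hφsum : pp k L ≤ (∑ c ∈ Cols L, φ c) + sF k L := by
    have h1 : pp k L = ((Cols L).filter fun c => eta L c % k ≠ 0).card := rfl
    have h2 : ((Cols L).filter fun c => eta L c % k ≠ 0).card
        = ((Cols L).filter fun c => eta L c % k ≠ 0 ∧ φ c = 0).card
          + ((Cols L).filter fun c => eta L c % k ≠ 0 ∧ φ c ≠ 0).card := by
      rw [← Finset.card_union_of_disjoint]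
      · congr 1
        rw [← Finset.filter_or]
        refine Finset.filter_congr fun c _ => ?_
        constructor
        · intro h
          by_cases h0 : φ c = 0
          · exact Or.inl ⟨h, h0⟩
          · exact Or.inr ⟨h, h0⟩
        · rintro (h | h) <;> exact h.1
      · rw [Finset.disjoint_left]
        rintro c hc1 hc2
        exact (Finset.mem_filter.mp hc2).2.2 (Finset.mem_filter.mp hc1).2.2
    have h3 : ((Cols L).filter fun c => eta L c % k ≠ 0 ∧ φ c ≠ 0).card
        ≤ ∑ c ∈ Cols L, φ c := by
      calc ((Cols L).filter fun c => eta L c % k ≠ 0 ∧ φ c ≠ 0).card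
          = ∑ c ∈ (Cols L).filter fun c => eta L c % k ≠ 0 ∧ φ c ≠ 0, 1 :=
            (Finset.card_eq_sum_ones _)
        _ ≤ ∑ c ∈ (Cols L).filter fun c => eta L c % k ≠ 0 ∧ φ c ≠ 0, φ c := by
            refine Finset.sum_le_sum fun c hc => ?_
            have := (Finset.mem_filter.mp hc).2.2
            rcases hφ01 c with h | h <;> omega
        _ ≤ ∑ c ∈ Cols L, φ c :=
            Finset.sum_le_sum_of_subset (Finset.filter_subset _ _)
    have h4 := claimB
    omega
  have hEφsum : ∑ c ∈ Cols L, (Ec k L c - φ c) ≤ Fintype.card V := by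
    have e1 : ∑ c ∈ Cols L, (Ec k L c - φ c) + ∑ c ∈ Cols L, φ c
        = ∑ c ∈ Cols L, Ec k L c := by
      rw [← Finset.sum_add_distrib]
      exact Finset.sum_congr rfl fun c hc => Nat.sub_add_cancel (hφ_le_E c hc)
    have e2 := hsum_E k L hk
    have e3 := hsum_F_sF k L hk hL
    omega
  have heq : ∀ c ∈ Cols L,
      (univ.filter fun v => f v = c).card = Ec k L c - φ c := by
    have hsums : ∑ c ∈ Cols L, (univ.filter fun v => f v = c).card
        = ∑ c ∈ Cols L, (Ec k L c - φ c) := by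
      have h1 := Finset.sum_le_sum hnE
      omega
    exact fun c hc => (Finset.sum_eq_sum_iff_of_le hnE).mp hsums c hc
  refine ⟨f, hfL, ?_, ?_⟩
  · intro u v huv hne
    have hcp : cp G u = cp G v :=
      SimpleGraph.ConnectedComponent.sound huv.reachable
    have h1 : g (Sum.inl u) = g (Sum.inl v) := by
      rw [hfg, hfg, hcp, hne]
    have h2 := hginj h1
    have : u = v := by injection h2
    exact G.irrefl (this ▸ huv)
  · intro c hex
    have hc : c ∈ Cols L := by
      obtain ⟨v, hv⟩ := hex
      exact Finset.mem_biUnion.mpr ⟨v, Finset.mem_univ _, hv⟩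
    have hn := heq c hc
    by_cases hr : eta L c % k = 0
    · right
      rw [hn, hφr0 c hr, Nat.sub_zero]
      rfl
    · rcases hφ01 c with h0 | h1
      · right
        rw [hn, h0, Nat.sub_zero]
        rfl
      · left
        have hEFc := hEF k L hk c
        rw [if_neg hr] at hEFc
        rw [hn, h1]
        have : Ec k L c = Fc k L c + 1 := hEFc
        rw [this]
        rfl
end main

end S17

theorem stmt_17 {V : Type*} [Fintype V] (G : SimpleGraph V) (k : ℕ)
    (hcomp : ∀ v : V, {u : V | G.Reachable u v}.ncard ≤ k) :
    ProportionallyChoosable G k := by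
  classical
  intro L hL
  by_cases hV : IsEmpty V
  · refine ⟨fun _ => 0, fun v => (hV.elim v), fun u v _ _ => hV.elim u, ?_⟩
    rintro c ⟨v, -⟩
    exact (hV.elim v)
  · rw [not_isEmpty_iff] at hV
    obtain ⟨v0⟩ := hV
    have hk : 0 < k := by
      have h1 := hcomp v0
      have h2 : 0 < {u : V | G.Reachable u v0}.ncard := by
        rw [Set.ncard_pos (Set.toFinite _)]
        exact ⟨v0, SimpleGraph.Reachable.refl v0⟩
      omega
    have hsz : ∀ C : G.ConnectedComponent, (S17.fib G C).card ≤ k := by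
      intro C
      induction C using SimpleGraph.ConnectedComponent.ind with
      | _ v =>
        have e : S17.fib G (G.connectedComponentMk v)
            = Set.toFinset {u | G.Reachable u v} := by
          ext u
          simp only [S17.fib, Finset.mem_filter, Finset.mem_univ, true_and,
            Set.mem_toFinset, Set.mem_setOf_eq, S17.cp]
          exact SimpleGraph.ConnectedComponent.eq
        rw [e, ← Set.ncard_eq_toFinset_card']
        exact hcomp v
    obtain ⟨f, h1, h2, h3⟩ := S17.main G k L hk hL hsz
    exact ⟨f, h1, h2, h3⟩
end

section
/- If G is a disjoint union of complete graphs whose largest component has t vertices, then the proportional choice number of G equals t. -/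
open Finset

/-- The proportional choice number: the least `k` such that `G` is
proportionally `k`-choosable. -/
noncomputable def propChoiceNumber {V : Type*} [Fintype V] (G : SimpleGraph V) : ℕ :=
  sInf {k | ProportionallyChoosable G k}

/-- Fractional perfect matching implies a perfect matching (Hall). -/
theorem frac_hall {ι α : Type*} [Fintype ι] [Fintype α] [DecidableEq α]
    (w : ι → α → ℚ) (h0 : ∀ i a, 0 ≤ w i a)
    (hrow : ∀ i, ∑ a, w i a = 1) (hcol : ∀ a, ∑ i, w i a = 1) :
    ∃ f : ι → α, Function.Bijective f ∧ ∀ i, w i (f i) ≠ 0 := by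
  classical
  set nbr : ι → Finset α := fun i => univ.filter (fun a => w i a ≠ 0) with hnbr
  have hall : ∀ s : Finset ι, s.card ≤ (s.biUnion nbr).card := by
    intro s
    have key : (s.card : ℚ) ≤ ((s.biUnion nbr).card : ℚ) := by
      have h1 : (s.card : ℚ) = ∑ i ∈ s, ∑ a, w i a := by
        simp [hrow]
      have h2 : ∑ i ∈ s, ∑ a, w i a = ∑ a, ∑ i ∈ s, w i a := Finset.sum_comm
      have h3 : ∑ a, ∑ i ∈ s, w i a = ∑ a ∈ s.biUnion nbr, ∑ i ∈ s, w i a := by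
        refine (Finset.sum_subset (Finset.subset_univ _) ?_).symm
        intro a _ ha
        refine Finset.sum_eq_zero fun i hi => ?_
        by_contra hw
        exact ha (Finset.mem_biUnion.2 ⟨i, hi, by simp [hnbr, hw]⟩)
      have h4 : ∑ a ∈ s.biUnion nbr, ∑ i ∈ s, w i a ≤ ∑ a ∈ s.biUnion nbr, (1:ℚ) := by
        refine Finset.sum_le_sum fun a _ => ?_
        calc ∑ i ∈ s, w i a ≤ ∑ i, w i a :=
              Finset.sum_le_sum_of_subset_of_nonneg (Finset.subset_univ _)
                (fun i _ _ => h0 i a)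
          _ = 1 := hcol a
      rw [h1, h2, h3]
      simpa using h4
    exact_mod_cast key
  obtain ⟨f, hinj, hmem⟩ := (Finset.all_card_le_biUnion_card_iff_exists_injective nbr).1 hall
  have hcard : Fintype.card ι = Fintype.card α := by
    have : (Fintype.card ι : ℚ) = (Fintype.card α : ℚ) := by
      calc (Fintype.card ι : ℚ) = ∑ i : ι, (1:ℚ) := by simp
        _ = ∑ i : ι, ∑ a, w i a := by simp [hrow]
        _ = ∑ a : α, ∑ i, w i a := Finset.sum_comm
        _ = ∑ a : α, (1:ℚ) := by simp [hcol]
        _ = Fintype.card α := by simp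
    exact_mod_cast this
  refine ⟨f, (Fintype.bijective_iff_injective_and_card f).2 ⟨hinj, hcard⟩, fun i => ?_⟩
  have := hmem i
  simpa [hnbr] using this

namespace PCU

attribute [local instance] Classical.propDecidable

variable {V : Type*} [Fintype V] (G : SimpleGraph V) (L : V → Finset ℕ) (t : ℕ)

noncomputable local instance : Fintype G.ConnectedComponent :=
  @Quotient.fintype V _ G.reachableSetoid (fun _ _ => Classical.propDecidable _)

/-- number of vertices of component `i` whose list contains `c`. -/
noncomputable def mm (i : G.ConnectedComponent) (c : ℕ) : ℕ :=
  (univ.filter fun v => c ∈ L v ∧ G.connectedComponentMk v = i).card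

/-- the palette. -/
def CS : Finset ℕ := univ.biUnion L

noncomputable def qq (c : ℕ) : ℕ := eta L c / t
noncomputable def rr (c : ℕ) : ℕ := eta L c % t

/-- number of components containing `c` in some list. -/
noncomputable def pp (c : ℕ) : ℕ :=
  (univ.filter fun i : G.ConnectedComponent => 0 < mm G L i c).card

noncomputable def nn (c : ℕ) : ℕ := pp G L c - qq L t c

noncomputable def ss : ℕ := Fintype.card V - ∑ c ∈ CS L, qq L t c

lemma mm_le (hmax : ∀ v : V, {u : V | G.Reachable u v}.ncard ≤ t)
    (i : G.ConnectedComponent) (c : ℕ) : mm G L i c ≤ t := by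
  obtain ⟨v₀, rfl⟩ := i.exists_rep
  have h1 : mm G L (G.connectedComponentMk v₀) c
      ≤ (univ.filter fun v => G.connectedComponentMk v = G.connectedComponentMk v₀).card := by
    apply Finset.card_le_card
    intro v hv
    simp only [mem_filter, mem_univ, true_and] at hv ⊢
    exact hv.2
  have h2 : (univ.filter fun v => G.connectedComponentMk v = G.connectedComponentMk v₀).card
      = {u : V | G.Reachable u v₀}.ncard := by
    have : {u : V | G.Reachable u v₀}
        = ↑(univ.filter fun v => G.connectedComponentMk v = G.connectedComponentMk v₀) := by
      ext u
      simp [SimpleGraph.ConnectedComponent.eq]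
    rw [this, Set.ncard_coe_finset]
  exact h1.trans (h2 ▸ hmax v₀)

lemma sum_mm (c : ℕ) : ∑ i : G.ConnectedComponent, mm G L i c = eta L c := by
  rw [eta]
  rw [Finset.card_eq_sum_card_fiberwise
    (f := fun v => G.connectedComponentMk v) (t := univ) (fun x _ => mem_univ _)]
  apply Finset.sum_congr rfl
  intro i _
  rw [mm]
  congr 1
  ext v
  simp [and_comm]

lemma sum_mm_filter (c : ℕ) :
    ∑ i ∈ univ.filter (fun i : G.ConnectedComponent => 0 < mm G L i c), mm G L i c
      = eta L c := by
  rw [← sum_mm G L c]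
  apply Finset.sum_subset (Finset.filter_subset _ _)
  intro i _ hi
  simp only [mem_filter, mem_univ, true_and, not_lt, Nat.le_zero] at hi
  omega

lemma eta_le (hmax : ∀ v : V, {u : V | G.Reachable u v}.ncard ≤ t) (c : ℕ) :
    eta L c ≤ t * pp G L c := by
  rw [← sum_mm_filter G L c, pp, mul_comm]
  apply Finset.sum_le_card_nsmul
  intro i _
  exact mm_le G L t hmax i c

lemma qq_le_pp (ht : 0 < t) (hmax : ∀ v : V, {u : V | G.Reachable u v}.ncard ≤ t) (c : ℕ) :
    qq L t c ≤ pp G L c := by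
  rw [qq, Nat.div_le_iff_le_mul_add_pred ht]
  have := eta_le G L t hmax c
  nlinarith [eta_le G L t hmax c]

lemma div_add_mod' (c : ℕ) : t * qq L t c + rr L t c = eta L c := Nat.div_add_mod _ _

lemma rr_lt (ht : 0 < t) (c : ℕ) : rr L t c < t := Nat.mod_lt _ ht

lemma nn_zero (ht : 0 < t) (hmax : ∀ v : V, {u : V | G.Reachable u v}.ncard ≤ t) (c : ℕ)
    (h : nn G L t c = 0) :
    rr L t c = 0 ∧ eta L c = t * pp G L c ∧
      ∀ i, 0 < mm G L i c → mm G L i c = t := by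
  have hqp := qq_le_pp G L t ht hmax c
  have hpq : pp G L c = qq L t c := by rw [nn] at h; omega
  have h1 := div_add_mod' L t c
  have h2 := eta_le G L t hmax c
  have h3 := rr_lt L t ht c
  rw [hpq] at h2
  have heq : eta L c = t * pp G L c := by rw [hpq]; omega
  refine ⟨by omega, heq, ?_⟩
  intro i hi
  by_contra hne
  have hlt : mm G L i c < t := lt_of_le_of_ne (mm_le G L t hmax i c) hne
  have : ∑ j ∈ univ.filter (fun j : G.ConnectedComponent => 0 < mm G L j c), mm G L j c
      < ∑ j ∈ univ.filter (fun j : G.ConnectedComponent => 0 < mm G L j c), t := by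
    apply Finset.sum_lt_sum
    · intro j _; exact mm_le G L t hmax j c
    · exact ⟨i, by simp [hi], hlt⟩
  rw [sum_mm_filter, Finset.sum_const, smul_eq_mul, mul_comm] at this
  have hp : pp G L c = #(filter (fun i : G.ConnectedComponent => 0 < mm G L i c) univ) := rfl
  rw [heq, hp] at this
  omega

lemma sum_eta (hL : ∀ v, (L v).card = t) : ∑ c ∈ CS L, eta L c = t * Fintype.card V := by
  have : ∀ c, eta L c = ∑ v : V, if c ∈ L v then 1 else 0 := by
    intro c; rw [eta, Finset.card_filter]
  calc ∑ c ∈ CS L, eta L c = ∑ c ∈ CS L, ∑ v : V, if c ∈ L v then 1 else 0 := by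
        simp_rw [this]
    _ = ∑ v : V, ∑ c ∈ CS L, if c ∈ L v then 1 else 0 := Finset.sum_comm
    _ = ∑ v : V, (L v).card := by
        apply Finset.sum_congr rfl
        intro v _
        have hsub : L v ⊆ CS L := fun c hc => Finset.mem_biUnion.2 ⟨v, mem_univ v, hc⟩
        rw [Finset.sum_ite_mem, Finset.inter_eq_right.2 hsub]
        simp
    _ = t * Fintype.card V := by
        simp [hL, Finset.sum_const, mul_comm]

lemma sum_qq_rr (ht : 0 < t) (hL : ∀ v, (L v).card = t) :
    t * ∑ c ∈ CS L, qq L t c + ∑ c ∈ CS L, rr L t c = t * Fintype.card V := by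
  have h1 : ∑ c ∈ CS L, (t * qq L t c + rr L t c) = t * Fintype.card V := by
    rw [Finset.sum_congr rfl (fun c _ => div_add_mod' L t c), sum_eta L t hL]
  rwa [Finset.sum_add_distrib, ← Finset.mul_sum] at h1

lemma sum_qq_le (ht : 0 < t) (hL : ∀ v, (L v).card = t) :
    ∑ c ∈ CS L, qq L t c ≤ Fintype.card V := by
  have h1 := sum_qq_rr L t ht hL
  by_contra hlt
  push_neg at hlt
  have : t * Fintype.card V < t * ∑ c ∈ CS L, qq L t c := (Nat.mul_lt_mul_left ht).2 hlt
  omega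

lemma t_mul_ss (ht : 0 < t) (hL : ∀ v, (L v).card = t) :
    t * ss L t = ∑ c ∈ CS L, rr L t c := by
  have h1 := sum_qq_rr L t ht hL
  have h2 := sum_qq_le L t ht hL
  have h3 : t * ss L t = t * Fintype.card V - t * ∑ c ∈ CS L, qq L t c := by
    rw [ss, Nat.mul_sub]
  omega

noncomputable def W (c : ℕ) : ℚ := (pp G L c : ℚ) - (eta L c : ℚ) / t

lemma eta_cast (ht : 0 < t) (c : ℕ) :
    (eta L c : ℚ) / t = qq L t c + rr L t c / t := by
  have h := div_add_mod' L t c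
  have htq : (t : ℚ) ≠ 0 := Nat.cast_ne_zero.2 ht.ne'
  field_simp
  rw [mul_comm]
  exact_mod_cast (show eta L c = qq L t c * t + rr L t c by rw [Nat.mul_comm]; exact h.symm)

lemma W_eq (ht : 0 < t) (c : ℕ) :
    W G L t c = (pp G L c : ℚ) - qq L t c - rr L t c / t := by
  rw [W, eta_cast L t ht c]; ring

lemma nn_cast (ht : 0 < t) (hmax : ∀ v : V, {u : V | G.Reachable u v}.ncard ≤ t) (c : ℕ) :
    (nn G L t c : ℚ) = (pp G L c : ℚ) - qq L t c := by
  rw [nn, Nat.cast_sub (qq_le_pp G L t ht hmax c)]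

lemma nn_sub_rr (ht : 0 < t) (hmax : ∀ v : V, {u : V | G.Reachable u v}.ncard ≤ t) (c : ℕ) :
    (nn G L t c : ℚ) - rr L t c / t = W G L t c := by
  rw [nn_cast G L t ht hmax c, W_eq G L t ht c]

lemma rr_div_lt (ht : 0 < t) (c : ℕ) : (rr L t c : ℚ) / t < 1 := by
  have h := rr_lt L t ht c
  have htq : (0 : ℚ) < t := by exact_mod_cast ht
  rw [div_lt_one htq]
  exact_mod_cast h

lemma rr_div_nonneg (c : ℕ) : 0 ≤ (rr L t c : ℚ) / t := by positivity

lemma W_pos (ht : 0 < t) (hmax : ∀ v : V, {u : V | G.Reachable u v}.ncard ≤ t) (c : ℕ)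
    (h : 0 < nn G L t c) : 0 < W G L t c := by
  rw [← nn_sub_rr G L t ht hmax c]
  have h1 : (1 : ℚ) ≤ (nn G L t c : ℚ) := by exact_mod_cast h
  have := rr_div_lt L t ht c
  linarith

noncomputable def PairS : Finset (G.ConnectedComponent × ℕ) :=
  (univ ×ˢ CS L).filter fun x => 0 < mm G L x.1 x.2

noncomputable def CpyS : Finset (ℕ × ℕ) :=
  (CS L ×ˢ range (Fintype.card G.ConnectedComponent)).filter fun x => x.2 < nn G L t x.1

lemma mm_pos_mem_CS {i : G.ConnectedComponent} {c : ℕ} (h : 0 < mm G L i c) : c ∈ CS L := by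
  rw [mm, Finset.card_pos] at h
  obtain ⟨v, hv⟩ := h
  simp only [mem_filter, mem_univ, true_and] at hv
  exact Finset.mem_biUnion.2 ⟨v, mem_univ v, hv.1⟩

lemma mem_PairS {x : G.ConnectedComponent × ℕ} : x ∈ PairS G L ↔ 0 < mm G L x.1 x.2 := by
  constructor
  · intro h; exact (Finset.mem_filter.1 h).2
  · intro h
    exact Finset.mem_filter.2 ⟨Finset.mem_product.2 ⟨mem_univ _, mm_pos_mem_CS G L h⟩, h⟩

lemma pp_le_cardK (c : ℕ) : pp G L c ≤ Fintype.card G.ConnectedComponent := by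
  rw [pp]
  exact (Finset.card_filter_le _ _).trans (by simp)

lemma mem_CpyS {x : ℕ × ℕ} : x ∈ CpyS G L t ↔ x.1 ∈ CS L ∧ x.2 < nn G L t x.1 := by
  constructor
  · intro h
    have h1 := Finset.mem_filter.1 h
    exact ⟨(Finset.mem_product.1 h1.1).1, h1.2⟩
  · intro h
    refine Finset.mem_filter.2 ⟨Finset.mem_product.2 ⟨h.1, Finset.mem_range.2 ?_⟩, h.2⟩
    have := pp_le_cardK G L x.1
    have : nn G L t x.1 ≤ pp G L x.1 := Nat.sub_le _ _
    omega

noncomputable def fac (d : ℕ × ℕ) : ℚ := if d.2 = 0 then 1 - (rr L t d.1 : ℚ) / t else 1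

noncomputable def wVP (v : V) (x : G.ConnectedComponent × ℕ) : ℚ :=
  if x.2 ∈ L v ∧ G.connectedComponentMk v = x.1 then 1/(t:ℚ) else 0

noncomputable def wDP (d : ℕ × ℕ) (x : G.ConnectedComponent × ℕ) : ℚ :=
  if x.2 = d.1 then (1 - (mm G L x.1 d.1 : ℚ)/t) * fac L t d / W G L t d.1 else 0

noncomputable def wDG (d : ℕ × ℕ) : ℚ :=
  if d.2 = 0 then (rr L t d.1 : ℚ)/((t : ℚ) * (ss L t : ℚ)) else 0

noncomputable def wt : V ⊕ {x // x ∈ CpyS G L t} → {x // x ∈ PairS G L} ⊕ Fin (ss L t) → ℚ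
  | Sum.inl v, Sum.inl pr => wVP G L t v pr.1
  | Sum.inl _, Sum.inr _ => 0
  | Sum.inr d, Sum.inl pr => wDP G L t d.1 pr.1
  | Sum.inr d, Sum.inr _ => wDG L t d.1

lemma filter_PairS_vertex (v : V) :
    (PairS G L).filter (fun x => x.2 ∈ L v ∧ G.connectedComponentMk v = x.1)
      = (L v).image (fun c => (G.connectedComponentMk v, c)) := by
  ext ⟨i, c⟩
  simp only [Finset.mem_filter, Finset.mem_image, mem_PairS]
  constructor
  · rintro ⟨_, hc, hi⟩
    exact ⟨c, hc, by rw [hi]⟩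
  · rintro ⟨c', hc', h⟩
    obtain ⟨h1, h2⟩ := Prod.mk.injEq .. ▸ h
    subst h2
    rw [← h1]
    refine ⟨?_, hc', rfl⟩
    rw [mm, Finset.card_pos]
    exact ⟨v, Finset.mem_filter.2 ⟨mem_univ v, hc', rfl⟩⟩

lemma filter_PairS_col (c : ℕ) :
    (PairS G L).filter (fun x => x.2 = c)
      = (univ.filter fun i => 0 < mm G L i c).image (fun i => (i, c)) := by
  ext ⟨i, c'⟩
  simp only [Finset.mem_filter, Finset.mem_image, mem_PairS, mem_univ, true_and]
  constructor
  · rintro ⟨h, rfl⟩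
    exact ⟨i, h, rfl⟩
  · rintro ⟨i', h, heq⟩
    obtain ⟨h1, h2⟩ := Prod.mk.injEq .. ▸ heq
    subst h1; subst h2
    exact ⟨h, rfl⟩

lemma filter_CpyS_col (c : ℕ) (hc : c ∈ CS L) :
    (CpyS G L t).filter (fun x => x.1 = c)
      = (range (nn G L t c)).image (fun j => (c, j)) := by
  ext ⟨c', j⟩
  simp only [Finset.mem_filter, Finset.mem_image, mem_CpyS, Finset.mem_range]
  constructor
  · rintro ⟨⟨_, hj⟩, rfl⟩
    exact ⟨j, hj, rfl⟩
  · rintro ⟨j', hj, heq⟩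
    obtain ⟨h1, h2⟩ := Prod.mk.injEq .. ▸ heq
    subst h1; subst h2
    exact ⟨⟨hc, hj⟩, rfl⟩

lemma filter_CpyS_col' (c : ℕ) (hc : c ∈ CS L) :
    (CpyS G L t).filter (fun x => c = x.1)
      = (range (nn G L t c)).image (fun j => (c, j)) := by
  ext ⟨c', j⟩
  simp only [Finset.mem_filter, Finset.mem_image, mem_CpyS, Finset.mem_range]
  constructor
  · rintro ⟨⟨_, hj⟩, rfl⟩
    exact ⟨j, hj, rfl⟩
  · rintro ⟨j', hj, heq⟩
    obtain ⟨h1, h2⟩ := Prod.mk.injEq .. ▸ heq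
    subst h1; subst h2
    exact ⟨⟨hc, hj⟩, rfl⟩

lemma filter_CpyS_zero :
    (CpyS G L t).filter (fun x => x.2 = 0)
      = ((CS L).filter (fun c => 0 < nn G L t c)).image (fun c => (c, 0)) := by
  ext ⟨c, j⟩
  simp only [Finset.mem_filter, Finset.mem_image, mem_CpyS]
  constructor
  · rintro ⟨⟨hc, hj⟩, rfl⟩
    exact ⟨c, ⟨hc, by omega⟩, rfl⟩
  · rintro ⟨c', ⟨hc, hn⟩, heq⟩
    obtain ⟨h1, h2⟩ := Prod.mk.injEq .. ▸ heq
    subst h1; subst h2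
    exact ⟨⟨hc, hn⟩, rfl⟩

lemma sum_one_sub_mm (c : ℕ) :
    ∑ i ∈ univ.filter (fun i : G.ConnectedComponent => 0 < mm G L i c),
      (1 - (mm G L i c : ℚ)/t) = W G L t c := by
  rw [Finset.sum_sub_distrib, Finset.sum_const, ← Finset.sum_div, W]
  have h1 : ∑ i ∈ univ.filter (fun i : G.ConnectedComponent => 0 < mm G L i c),
      (mm G L i c : ℚ) = (eta L c : ℚ) := by
    rw [← Nat.cast_sum]
    exact_mod_cast congrArg (Nat.cast : ℕ → ℚ) (sum_mm_filter G L c)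
  rw [h1, pp]
  simp [nsmul_eq_mul]

lemma sum_fac (c : ℕ) (h : 0 < nn G L t c) :
    ∑ j ∈ range (nn G L t c), fac L t (c, j) = (nn G L t c : ℚ) - rr L t c / t := by
  simp only [fac]
  have : ∀ j ∈ range (nn G L t c),
      (if (c, j).2 = 0 then 1 - (rr L t (c,j).1 : ℚ) / t else 1)
        = 1 - (if j = 0 then (rr L t c : ℚ) / t else 0) := by
    intro j _
    by_cases hj : j = 0 <;> simp [hj]
  rw [Finset.sum_congr rfl this, Finset.sum_sub_distrib, Finset.sum_const,
    Finset.sum_ite_eq' (range (nn G L t c)) 0 (fun _ => (rr L t c : ℚ) / t)]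
  simp [Finset.mem_range.2 h, nsmul_eq_mul]

lemma row_v (ht : 0 < t) (hL : ∀ v, (L v).card = t) (v : V) :
    ∑ a : {x // x ∈ PairS G L} ⊕ Fin (ss L t), wt G L t (Sum.inl v) a = 1 := by
  rw [Fintype.sum_sum_type]
  have h2 : ∑ g : Fin (ss L t), wt G L t (Sum.inl v) (Sum.inr g) = 0 := by
    simp [wt]
  have h1 : ∑ pr : {x // x ∈ PairS G L}, wt G L t (Sum.inl v) (Sum.inl pr)
      = ∑ x ∈ PairS G L, wVP G L t v x :=
    Finset.sum_coe_sort (PairS G L) (wVP G L t v)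
  rw [h1, h2, add_zero]
  simp only [wVP]
  rw [← Finset.sum_filter, filter_PairS_vertex,
    Finset.sum_image (by intro a _ b _ h; exact (Prod.mk.injEq .. ▸ h).2),
    Finset.sum_const, hL v, nsmul_eq_mul]
  have htq : (t : ℚ) ≠ 0 := Nat.cast_ne_zero.2 ht.ne'
  field_simp

lemma row_d (ht : 0 < t) (hL : ∀ v, (L v).card = t)
    (hmax : ∀ v : V, {u : V | G.Reachable u v}.ncard ≤ t)
    (d : {x // x ∈ CpyS G L t}) :
    ∑ a : {x // x ∈ PairS G L} ⊕ Fin (ss L t), wt G L t (Sum.inr d) a = 1 := by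
  obtain ⟨hc, hlt⟩ := (mem_CpyS G L t).1 d.2
  have hnn : 0 < nn G L t d.1.1 := by omega
  have hW : W G L t d.1.1 ≠ 0 := (W_pos G L t ht hmax d.1.1 hnn).ne'
  rw [Fintype.sum_sum_type]
  have h1 : ∑ pr : {x // x ∈ PairS G L}, wt G L t (Sum.inr d) (Sum.inl pr)
      = ∑ x ∈ PairS G L, wDP G L t d.1 x :=
    Finset.sum_coe_sort (PairS G L) (wDP G L t d.1)
  have h2 : ∑ g : Fin (ss L t), wt G L t (Sum.inr d) (Sum.inr g)
      = (ss L t : ℚ) • wDG L t d.1 := by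
    rw [show (fun g : Fin (ss L t) => wt G L t (Sum.inr d) (Sum.inr g))
      = (fun _ => wDG L t d.1) from rfl]
    simp
  rw [h1, h2]
  simp only [wDP]
  rw [← Finset.sum_filter, filter_PairS_col,
    Finset.sum_image (by intro a _ b _ h; exact (Prod.mk.injEq .. ▸ h).1)]
  have h3 : ∑ i ∈ univ.filter (fun i : G.ConnectedComponent => 0 < mm G L i d.1.1),
      (1 - (mm G L i d.1.1 : ℚ)/t) * fac L t d.1 / W G L t d.1.1
      = (∑ i ∈ univ.filter (fun i : G.ConnectedComponent => 0 < mm G L i d.1.1),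
          (1 - (mm G L i d.1.1 : ℚ)/t)) * fac L t d.1 / W G L t d.1.1 := by
    rw [Finset.sum_mul, Finset.sum_div]
  rw [h3, sum_one_sub_mm]
  have h5 : W G L t d.1.1 * fac L t d.1 / W G L t d.1.1 = fac L t d.1 := by
    rw [mul_comm, mul_div_assoc, div_self hW, mul_one]
  rw [h5]
  by_cases hj : d.1.2 = 0
  · simp only [fac, wDG, hj, if_true]
    by_cases hs : ss L t = 0
    · have h4 := t_mul_ss L t ht hL
      rw [hs, mul_zero] at h4
      have h5 : rr L t d.1.1 = 0 := by
        have := (Finset.sum_eq_zero_iff).1 h4.symm d.1.1 hc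
        omega
      simp [h5, hs]
    · have hsq : (ss L t : ℚ) ≠ 0 := Nat.cast_ne_zero.2 hs
      have htq : (t : ℚ) ≠ 0 := Nat.cast_ne_zero.2 ht.ne'
      rw [smul_eq_mul]
      field_simp
      ring
  · simp [fac, wDG, hj]

lemma col_p (ht : 0 < t) (hmax : ∀ v : V, {u : V | G.Reachable u v}.ncard ≤ t)
    (pr : {x // x ∈ PairS G L}) :
    ∑ i : V ⊕ {x // x ∈ CpyS G L t}, wt G L t i (Sum.inl pr) = 1 := by
  have hmm : 0 < mm G L pr.1.1 pr.1.2 := (mem_PairS G L).1 pr.2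
  have hc : pr.1.2 ∈ CS L := mm_pos_mem_CS G L hmm
  have htq : (t : ℚ) ≠ 0 := Nat.cast_ne_zero.2 ht.ne'
  rw [Fintype.sum_sum_type]
  have h1 : ∑ v : V, wt G L t (Sum.inl v) (Sum.inl pr)
      = (mm G L pr.1.1 pr.1.2 : ℚ) * (1/t) := by
    rw [show (fun v : V => wt G L t (Sum.inl v) (Sum.inl pr))
      = (fun v : V => wVP G L t v pr.1) from rfl]
    simp only [wVP]
    rw [← Finset.sum_filter, Finset.sum_const, nsmul_eq_mul, mm]
  have h2 : ∑ d : {x // x ∈ CpyS G L t}, wt G L t (Sum.inr d) (Sum.inl pr)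
      = ∑ x ∈ CpyS G L t, wDP G L t x pr.1 :=
    Finset.sum_coe_sort (CpyS G L t) (fun x => wDP G L t x pr.1)
  rw [h1, h2]
  simp only [wDP]
  rw [← Finset.sum_filter, filter_CpyS_col' G L t pr.1.2 hc,
    Finset.sum_image (by intro a _ b _ h; exact (Prod.mk.injEq .. ▸ h).2)]
  by_cases hnn : 0 < nn G L t pr.1.2
  · have hW : W G L t pr.1.2 ≠ 0 := (W_pos G L t ht hmax pr.1.2 hnn).ne'
    have h3 : ∑ j ∈ range (nn G L t pr.1.2),
        (1 - (mm G L pr.1.1 pr.1.2 : ℚ)/t) * fac L t (pr.1.2, j) / W G L t pr.1.2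
        = (1 - (mm G L pr.1.1 pr.1.2 : ℚ)/t) / W G L t pr.1.2
            * ∑ j ∈ range (nn G L t pr.1.2), fac L t (pr.1.2, j) := by
      rw [Finset.mul_sum]
      apply Finset.sum_congr rfl
      intro j _
      ring
    rw [h3, sum_fac G L t pr.1.2 hnn, nn_sub_rr G L t ht hmax pr.1.2,
      div_mul_cancel₀ _ hW]
    ring
  · have hn0 : nn G L t pr.1.2 = 0 := by omega
    obtain ⟨hr, he, hall⟩ := nn_zero G L t ht hmax pr.1.2 hn0
    rw [hn0]
    simp only [range_zero, Finset.sum_empty, add_zero]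
    rw [hall pr.1.1 hmm]
    field_simp

lemma col_g (ht : 0 < t) (hL : ∀ v, (L v).card = t)
    (hmax : ∀ v : V, {u : V | G.Reachable u v}.ncard ≤ t) (g : Fin (ss L t)) :
    ∑ i : V ⊕ {x // x ∈ CpyS G L t}, wt G L t i (Sum.inr g) = 1 := by
  have hs : 0 < ss L t := g.pos
  have hsq : (ss L t : ℚ) ≠ 0 := Nat.cast_ne_zero.2 hs.ne'
  have htq : (t : ℚ) ≠ 0 := Nat.cast_ne_zero.2 ht.ne'
  rw [Fintype.sum_sum_type]
  have h1 : ∑ v : V, wt G L t (Sum.inl v) (Sum.inr g) = 0 := by simp [wt]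
  have h2 : ∑ d : {x // x ∈ CpyS G L t}, wt G L t (Sum.inr d) (Sum.inr g)
      = ∑ x ∈ CpyS G L t, wDG L t x :=
    Finset.sum_coe_sort (CpyS G L t) (wDG L t)
  rw [h1, h2, zero_add]
  simp only [wDG]
  rw [← Finset.sum_filter, filter_CpyS_zero,
    Finset.sum_image (by intro a _ b _ h; exact (Prod.mk.injEq .. ▸ h).1)]
  have h3 : ∑ c ∈ (CS L).filter (fun c => 0 < nn G L t c), (rr L t c : ℚ)/((t:ℚ)*(ss L t:ℚ))
      = ∑ c ∈ CS L, (rr L t c : ℚ)/((t:ℚ)*(ss L t:ℚ)) := by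
    apply Finset.sum_subset (Finset.filter_subset _ _)
    intro c hcs hnc
    have hn : nn G L t c = 0 := by
      simp only [Finset.mem_filter, hcs, true_and, not_lt, Nat.le_zero] at hnc
      exact hnc
    have hr := (nn_zero G L t ht hmax c hn).1
    simp [hr]
  rw [h3, ← Finset.sum_div]
  have h4 : ∑ c ∈ CS L, (rr L t c : ℚ) = ((t * ss L t : ℕ) : ℚ) := by
    rw [t_mul_ss L t ht hL]
    exact_mod_cast rfl
  rw [h4]
  push_cast
  field_simp

lemma wt_nonneg (ht : 0 < t)
    (hmax : ∀ v : V, {u : V | G.Reachable u v}.ncard ≤ t) :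
    ∀ i a, 0 ≤ wt G L t i a := by
  have htq : (0:ℚ) < t := by exact_mod_cast ht
  rintro (v | d) (pr | g)
  · show 0 ≤ wVP G L t v pr.1
    rw [wVP]
    split
    · positivity
    · exact le_refl 0
  · show (0:ℚ) ≤ 0
    exact le_refl 0
  · show 0 ≤ wDP G L t d.1 pr.1
    rw [wDP]
    split
    · apply div_nonneg
      · apply mul_nonneg
        · have hm : (mm G L pr.1.1 d.1.1 : ℚ) ≤ t := by
            exact_mod_cast mm_le G L t hmax pr.1.1 d.1.1
          have : (mm G L pr.1.1 d.1.1 : ℚ)/t ≤ 1 := by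
            rw [div_le_one htq]; exact hm
          linarith
        · rw [fac]
          split
          · have := rr_div_lt L t ht d.1.1
            linarith
          · norm_num
      · obtain ⟨hc, hlt⟩ := (mem_CpyS G L t).1 d.2
        have hnn : 0 < nn G L t d.1.1 := by omega
        exact (W_pos G L t ht hmax d.1.1 hnn).le
    · exact le_refl 0
  · show 0 ≤ wDG L t d.1
    rw [wDG]
    split
    · apply div_nonneg
      · positivity
      · positivity
    · exact le_refl 0

lemma ceil_eq (ht : 0 < t) (c : ℕ) (hr : rr L t c ≠ 0) :
    (eta L c + t - 1) / t = qq L t c + 1 := by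
  have h := div_add_mod' L t c
  have h2 := rr_lt L t ht c
  have h3 : eta L c + t - 1 = t * (qq L t c + 1) + (rr L t c - 1) := by
    rw [Nat.mul_add, mul_one]; omega
  rw [h3, Nat.mul_add_div ht, Nat.div_eq_of_lt (by omega)]

theorem upper (ht : 0 < t)
    (hmax : ∀ v : V, {u : V | G.Reachable u v}.ncard ≤ t)
    (hL : ∀ v, (L v).card = t) :
    ∃ F : V → ℕ, (∀ v, F v ∈ L v) ∧ (∀ u v, G.Adj u v → F u ≠ F v) ∧
      ∀ c, (∃ v, c ∈ L v) →
        (univ.filter fun v => F v = c).card = eta L c / t ∨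
        (univ.filter fun v => F v = c).card = (eta L c + t - 1) / t := by
  obtain ⟨f, hbij, hne⟩ := frac_hall (wt G L t) (wt_nonneg G L t ht hmax)
    (by rintro (v | d)
        · exact row_v G L t ht hL v
        · exact row_d G L t ht hL hmax d)
    (by rintro (pr | g)
        · exact col_p G L t ht hmax pr
        · exact col_g G L t ht hL hmax g)
  set F : V → ℕ := fun v => Sum.elim (fun pr : {x // x ∈ PairS G L} => pr.1.2)
    (fun _ : Fin (ss L t) => 0) (f (Sum.inl v)) with hF
  have hFv : ∀ v : V, ∃ pr : {x // x ∈ PairS G L}, f (Sum.inl v) = Sum.inl pr ∧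
      pr.1.1 = G.connectedComponentMk v ∧ pr.1.2 = F v ∧ F v ∈ L v := by
    intro v
    have h := hne (Sum.inl v)
    cases hfv : f (Sum.inl v) with
    | inr g =>
      rw [hfv] at h
      exact absurd rfl h
    | inl pr =>
      rw [hfv] at h
      have h2 : wVP G L t v pr.1 ≠ 0 := h
      rw [wVP] at h2
      by_cases hcond : pr.1.2 ∈ L v ∧ G.connectedComponentMk v = pr.1.1
      · have hFveq : F v = pr.1.2 := by rw [hF]; simp only; rw [hfv]; rfl
        exact ⟨pr, rfl, hcond.2.symm, hFveq.symm, hFveq ▸ hcond.1⟩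
      · rw [if_neg hcond] at h2
        exact absurd rfl h2
  refine ⟨F, fun v => (hFv v).choose_spec.2.2.2, ?_, ?_⟩
  · intro u v hadj heq
    obtain ⟨pru, hu1, hu2, hu3, _⟩ := hFv u
    obtain ⟨prv, hv1, hv2, hv3, _⟩ := hFv v
    have hcmp : G.connectedComponentMk u = G.connectedComponentMk v :=
      SimpleGraph.ConnectedComponent.sound hadj.reachable
    have hpr : pru = prv := by
      apply Subtype.ext
      apply Prod.ext
      · rw [hu2, hv2, hcmp]
      · rw [hu3, hv3, heq]
    have hinj : (Sum.inl u : V ⊕ {x // x ∈ CpyS G L t}) = Sum.inl v := by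
      apply hbij.injective
      rw [hu1, hv1, hpr]
    exact hadj.ne (Sum.inl_injective hinj)
  · intro c hcex
    obtain ⟨v₀, hv₀⟩ := hcex
    have hc : c ∈ CS L := Finset.mem_biUnion.2 ⟨v₀, mem_univ v₀, hv₀⟩
    set colD : Finset {x // x ∈ CpyS G L t} := univ.filter (fun d => d.1.1 = c) with hcolD
    set colP : Finset {x // x ∈ PairS G L} := univ.filter (fun pr => pr.1.2 = c) with hcolP
    set P1 : Finset V := univ.filter (fun v => F v = c) with hP1
    set P2 : Finset {x // x ∈ CpyS G L t} :=
      colD.filter (fun d => ∃ pr : {x // x ∈ PairS G L}, f (Sum.inr d) = Sum.inl pr) with hP2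
    set bse : Finset {x // x ∈ CpyS G L t} :=
      colD.filter (fun d => ¬ ∃ pr : {x // x ∈ PairS G L}, f (Sum.inr d) = Sum.inl pr) with hbse
    -- the ghost-or-pair dichotomy for copies in column c
    have hbse_elt : ∀ d ∈ bse, d.1 = (c, 0) := by
      intro d hd
      rw [hbse, Finset.mem_filter, hcolD, Finset.mem_filter] at hd
      obtain ⟨⟨_, hdc⟩, hnex⟩ := hd
      cases hfd : f (Sum.inr d) with
      | inl pr => exact absurd ⟨pr, hfd⟩ hnex
      | inr g =>
        have h := hne (Sum.inr d)
        rw [hfd] at h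
        have h2 : wDG L t d.1 ≠ 0 := h
        rw [wDG] at h2
        by_cases hz : d.1.2 = 0
        · exact Prod.ext hdc hz
        · rw [if_neg hz] at h2
          exact absurd rfl h2
    have hbse_card : bse.card ≤ 1 := by
      apply Finset.card_le_one.2
      intro a ha b hb
      exact Subtype.ext ((hbse_elt a ha).trans (hbse_elt b hb).symm)
    have hbse_zero : rr L t c = 0 → bse.card = 0 := by
      intro hr
      rw [Finset.card_eq_zero]
      by_contra hne'
      obtain ⟨d, hd⟩ := Finset.nonempty_of_ne_empty hne'
      have hd1 := hbse_elt d hd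
      rw [hbse, Finset.mem_filter] at hd
      obtain ⟨_, hnex⟩ := hd
      cases hfd : f (Sum.inr d) with
      | inl pr => exact absurd ⟨pr, hfd⟩ hnex
      | inr g =>
        have h := hne (Sum.inr d)
        rw [hfd] at h
        have h2 : wDG L t d.1 ≠ 0 := h
        rw [wDG, hd1] at h2
        simp [hr] at h2
    have hcolD_card : colD.card = nn G L t c := by
      have hb : colD.card = ((CpyS G L t).filter (fun x => x.1 = c)).card := by
        apply Finset.card_bij (fun d _ => d.1)
        · intro d hd
          rw [hcolD, Finset.mem_filter] at hd
          exact Finset.mem_filter.2 ⟨d.2, hd.2⟩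
        · intro a ha b hb h
          exact Subtype.ext h
        · intro x hx
          rw [Finset.mem_filter] at hx
          exact ⟨⟨x, hx.1⟩, Finset.mem_filter.2 ⟨mem_univ _, hx.2⟩, rfl⟩
      rw [hb, filter_CpyS_col G L t c hc,
        Finset.card_image_of_injective _ (by intro a b h; exact (Prod.mk.injEq .. ▸ h).2),
        Finset.card_range]
    have hcolP_card : colP.card = pp G L c := by
      have hb : colP.card = ((PairS G L).filter (fun x => x.2 = c)).card := by
        apply Finset.card_bij (fun pr _ => pr.1)
        · intro d hd
          rw [hcolP, Finset.mem_filter] at hd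
          exact Finset.mem_filter.2 ⟨d.2, hd.2⟩
        · intro a ha b hb h
          exact Subtype.ext h
        · intro x hx
          rw [Finset.mem_filter] at hx
          exact ⟨⟨x, hx.1⟩, Finset.mem_filter.2 ⟨mem_univ _, hx.2⟩, rfl⟩
      rw [hb, filter_PairS_col G L c,
        Finset.card_image_of_injective _ (by intro a b h; exact (Prod.mk.injEq .. ▸ h).1)]
      rfl
    have hsplit : P2.card + bse.card = colD.card := by
      rw [hP2, hbse]
      exact Finset.card_filter_add_card_filter_not _
    -- the union bijection
    have hunion : P1.card + P2.card = pp G L c := by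
      have hdisj : Disjoint (P1.image Sum.inl)
          (P2.image (Sum.inr : {x // x ∈ CpyS G L t} → V ⊕ {x // x ∈ CpyS G L t})) := by
        rw [Finset.disjoint_left]
        rintro a ha hb
        obtain ⟨v, _, rfl⟩ := Finset.mem_image.1 ha
        obtain ⟨d, _, hdd⟩ := Finset.mem_image.1 hb
        exact nomatch hdd
      have himg : (P1.image Sum.inl ∪ P2.image Sum.inr).image f = colP.image Sum.inl := by
        ext a
        simp only [Finset.mem_image, Finset.mem_union]
        constructor
        · rintro ⟨x, hx, rfl⟩
          rcases hx with ⟨v, hv, rfl⟩ | ⟨d, hd, rfl⟩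
          · obtain ⟨pr, h1, h2, h3, h4⟩ := hFv v
            rw [hP1, Finset.mem_filter] at hv
            exact ⟨pr, Finset.mem_filter.2 ⟨mem_univ _, by rw [h3, hv.2]⟩, h1.symm⟩
          · rw [hP2, Finset.mem_filter] at hd
            obtain ⟨hdc, pr, hpr⟩ := hd
            have h := hne (Sum.inr d)
            rw [hpr] at h
            have h2 : wDP G L t d.1 pr.1 ≠ 0 := h
            rw [wDP] at h2
            by_cases hcnd : pr.1.2 = d.1.1
            · rw [hcolD, Finset.mem_filter] at hdc
              exact ⟨pr, Finset.mem_filter.2 ⟨mem_univ _, by rw [hcnd, hdc.2]⟩, hpr.symm⟩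
            · rw [if_neg hcnd] at h2
              exact absurd rfl h2
        · rintro ⟨pr, hpr, rfl⟩
          obtain ⟨x, hx⟩ := hbij.surjective (Sum.inl pr)
          rw [hcolP, Finset.mem_filter] at hpr
          refine ⟨x, ?_, hx⟩
          cases x with
          | inl v =>
            left
            obtain ⟨pr', h1, h2, h3, h4⟩ := hFv v
            have hpp : pr' = pr := Sum.inl_injective (h1.symm.trans hx)
            exact ⟨v, Finset.mem_filter.2 ⟨mem_univ _, by rw [← h3, hpp, hpr.2]⟩, rfl⟩
          | inr d =>
            right
            have h := hne (Sum.inr d)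
            rw [hx] at h
            have h2 : wDP G L t d.1 pr.1 ≠ 0 := h
            rw [wDP] at h2
            by_cases hcnd : pr.1.2 = d.1.1
            · exact ⟨d, Finset.mem_filter.2 ⟨Finset.mem_filter.2 ⟨mem_univ _,
                by rw [← hcnd, hpr.2]⟩, pr, hx⟩, rfl⟩
            · rw [if_neg hcnd] at h2
              exact absurd rfl h2
      have hcard1 : (P1.image Sum.inl ∪ P2.image Sum.inr).card = P1.card + P2.card := by
        rw [Finset.card_union_of_disjoint hdisj,
          Finset.card_image_of_injective _ Sum.inl_injective,
          Finset.card_image_of_injective _ Sum.inr_injective]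
      have hcard2 : ((P1.image Sum.inl ∪ P2.image Sum.inr).image f).card
          = (P1.image Sum.inl ∪ P2.image Sum.inr).card :=
        Finset.card_image_of_injective _ hbij.injective
      have hcard3 : (colP.image (Sum.inl : {x // x ∈ PairS G L} →
          {x // x ∈ PairS G L} ⊕ Fin (ss L t))).card = colP.card :=
        Finset.card_image_of_injective _ Sum.inl_injective
      rw [← hcard1, ← hcard2, himg, hcard3, hcolP_card]
    have hqp := qq_le_pp G L t ht hmax c
    have hnn_eq : nn G L t c = pp G L c - qq L t c := rfl
    have hP1card : P1.card = qq L t c + bse.card := by omega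
    by_cases hb : bse.card = 0
    · left
      have : P1.card = eta L c / t := by rw [hP1card, hb, add_zero]; rfl
      exact this
    · right
      have hb1 : bse.card = 1 := by omega
      have hr : rr L t c ≠ 0 := fun hr0 => hb (hbse_zero hr0)
      have : P1.card = (eta L c + t - 1) / t := by
        rw [hP1card, hb1, ceil_eq L t ht c hr]
      exact this

end PCU

theorem stmt_18 {V : Type*} [Fintype V] (G : SimpleGraph V)
    (hclique : ∀ u v : V, G.Reachable u v → u = v ∨ G.Adj u v)
    (t : ℕ) (hmax : ∀ v : V, {u : V | G.Reachable u v}.ncard ≤ t)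
    (hex : ∃ v : V, {u : V | G.Reachable u v}.ncard = t) :
    propChoiceNumber G = t := by
  classical
  obtain ⟨v₀, hv₀⟩ := hex
  have htpos : 0 < t := by
    rcases Nat.eq_zero_or_pos t with h0 | h
    · exfalso
      rw [h0] at hv₀
      have hfin : {u : V | G.Reachable u v₀}.Finite := Set.toFinite _
      have hemp : {u : V | G.Reachable u v₀} = ∅ := (Set.ncard_eq_zero hfin).1 hv₀
      have hv : v₀ ∈ {u : V | G.Reachable u v₀} := by
        exact SimpleGraph.Reachable.refl v₀
      rw [hemp] at hv
      exact hv
    · exact h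
  have hchoos : ProportionallyChoosable G t := by
    intro L hL
    obtain ⟨F, h1, h2, h3⟩ := PCU.upper G L t htpos hmax hL
    exact ⟨F, h1, h2, h3⟩
  have hlower : ∀ k, k < t → ¬ ProportionallyChoosable G k := by
    intro k hk hP
    obtain ⟨f, hf1, hf2, _⟩ := hP (fun _ => Finset.range k) (fun _ => Finset.card_range k)
    set Sf : Finset V := univ.filter (fun u => G.Reachable u v₀) with hSf
    have hcard : Sf.card = t := by
      rw [← hv₀]
      have hco : {u : V | G.Reachable u v₀} = ↑Sf := by
        ext u; simp [hSf]
      rw [hco, Set.ncard_coe_finset]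
    have hinj : Set.InjOn f ↑Sf := by
      intro u hu w hw heq
      rw [Finset.mem_coe, hSf, Finset.mem_filter] at hu hw
      have hr : G.Reachable u w := hu.2.trans hw.2.symm
      rcases hclique u w hr with rfl | hadj
      · rfl
      · exact absurd heq (hf2 u w hadj)
    have hle := Finset.card_le_card_of_injOn f (fun u _ => hf1 u) hinj
    rw [hcard, Finset.card_range] at hle
    omega
  have hmem : t ∈ {k | ProportionallyChoosable G k} := hchoos
  apply le_antisymm
  · exact Nat.sInf_le hmem
  · apply le_csInf ⟨t, hmem⟩
    intro k hkS
    by_contra hlt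
    push_neg at hlt
    exact hlower k hlt hkS
end

section
/- For every positive integer m, the proportional choice number of the star K_{1,m} equals 1 + ⌈m/2⌉. -/
open Finset

lemma sum_inter_card {I : Type*} (W : Finset I) (C : Finset ℕ) (L : I → Finset ℕ) :
    ∑ i ∈ W, (L i ∩ C).card = ∑ c ∈ C, (W.filter fun i => c ∈ L i).card := by
  calc ∑ i ∈ W, (L i ∩ C).card = ∑ i ∈ W, ∑ c ∈ C, (if c ∈ L i then 1 else 0) := by
        refine Finset.sum_congr rfl fun i _ => ?_
        rw [inter_comm, ← Finset.filter_mem_eq_inter, Finset.card_filter]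
    _ = ∑ c ∈ C, ∑ i ∈ W, (if c ∈ L i then 1 else 0) := Finset.sum_comm
    _ = ∑ c ∈ C, (W.filter fun i => c ∈ L i).card := by
        refine Finset.sum_congr rfl fun c _ => ?_
        rw [Finset.card_filter]


lemma exists_leaf_assignment (m k : ℕ) (hm : 0 < m) (hk : m + 2 ≤ 2 * k)
    (ll : Fin m → Finset ℕ) (Lu : Finset ℕ)
    (hll : ∀ i, (ll i).card = k) (hLu : Lu.card = k)
    (et : ℕ → ℕ)
    (het : ∀ c, et c = (if c ∈ Lu then 1 else 0) + (univ.filter fun i => c ∈ ll i).card)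
    (hetle : ∀ c, et c ≤ m + 1)
    (c0 : ℕ) (hc0 : c0 ∈ Lu)
    (hH1 : ∀ W : Finset (Fin m),
      W.card ≤ ∑ c ∈ (W.biUnion ll).erase c0, (if k + 1 ≤ et c then 2 else 1)) :
    ∃ h : Fin m → ℕ, (∀ i, h i ∈ ll i ∧ h i ≠ c0) ∧
      (∀ c, c ≠ c0 →
        (univ.filter fun i => h i = c).card ≤ (if k + 1 ≤ et c then 2 else 1)) ∧
      (∀ c, c ≠ c0 → k ≤ et c → 1 ≤ (univ.filter fun i => h i = c).card) := by
  classical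
  have hk2 : 2 ≤ k := by omega
  set allC : Finset ℕ := Lu ∪ univ.biUnion ll with hallC
  have hmemallC : ∀ c, c ∈ allC ↔ 1 ≤ et c := by
    intro c
    rw [het c]
    simp only [hallC, mem_union, mem_biUnion, mem_univ, true_and]
    constructor
    · rintro (h | ⟨i, hi⟩)
      · simp [h]
      · have hmem : i ∈ univ.filter fun j => c ∈ ll j := by simp [hi]
        have := Finset.card_pos.2 ⟨i, hmem⟩
        omega
    · intro h
      by_contra hcon
      push_neg at hcon
      obtain ⟨h1, h2⟩ := hcon
      have hemp : (univ.filter fun j => c ∈ ll j) = ∅ := by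
        ext i; simp only [mem_filter, mem_univ, true_and, Finset.notMem_empty, iff_false]
        exact fun hi => h2 i hi
      rw [if_neg h1, hemp] at h
      simp at h
  have hLusub : Lu ⊆ allC := Finset.subset_union_left
  have hllsub : ∀ i, ll i ⊆ allC := fun i =>
    (Finset.subset_biUnion_of_mem ll (mem_univ i)).trans Finset.subset_union_right
  have htotal : ∑ c ∈ allC, et c = (m + 1) * k := by
    have h1 : ∑ c ∈ allC, et c
        = ∑ c ∈ allC, (if c ∈ Lu then 1 else 0)
          + ∑ c ∈ allC, (univ.filter fun i => c ∈ ll i).card := by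
      rw [← Finset.sum_add_distrib]
      exact Finset.sum_congr rfl fun c _ => het c
    have h2 : ∑ c ∈ allC, (if c ∈ Lu then 1 else 0) = k := by
      rw [← Finset.card_filter, Finset.filter_mem_eq_inter,
        Finset.inter_eq_right.2 hLusub, hLu]
    have h3 : ∑ c ∈ allC, (univ.filter fun i => c ∈ ll i).card = m * k := by
      rw [← sum_inter_card univ allC ll]
      have : ∀ i ∈ (univ : Finset (Fin m)), (ll i ∩ allC).card = k := by
        intro i _
        rw [Finset.inter_eq_left.2 (hllsub i), hll i]
      rw [Finset.sum_congr rfl this]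
      simp [Finset.card_univ, mul_comm]
    rw [h1, h2, h3]; ring
  -- slots
  set s : ℕ → ℕ := fun c => if k + 1 ≤ et c then 2 else 1 with hs
  have hks : ∀ c, et c ≤ k * s c := by
    intro c
    by_cases hc : k + 1 ≤ et c
    · simp only [hs, if_pos hc]
      have := hetle c
      omega
    · simp only [hs, if_neg hc]
      omega
  set slotsOf : ℕ → Finset (ℕ × Bool) :=
    fun c => if k + 1 ≤ et c then {(c, false), (c, true)} else {(c, false)} with hslotsOf
  have hmem_slotsOf : ∀ c p, p ∈ slotsOf c → p.1 = c := by
    intro c p hp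
    simp only [hslotsOf] at hp
    split_ifs at hp <;> simp only [mem_insert, mem_singleton] at hp <;>
      first
        | (rcases hp with hp | hp <;> rw [hp])
        | rw [hp]
  have hfalse_mem : ∀ c, (c, false) ∈ slotsOf c := by
    intro c
    simp only [hslotsOf]
    split_ifs <;> simp
  have htrue_mem : ∀ c p, p ∈ slotsOf c → p.2 = true → k + 1 ≤ et c := by
    intro c p hp h2
    simp only [hslotsOf] at hp
    split_ifs at hp with hcc
    · exact hcc
    · simp only [mem_singleton] at hp
      rw [hp] at h2; simp at h2
  have hslotsOf_card : ∀ c, (slotsOf c).card = s c := by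
    intro c
    simp only [hslotsOf, hs]
    split_ifs
    · rw [Finset.card_insert_of_notMem (by simp), Finset.card_singleton]
    · exact Finset.card_singleton _
  have hdisj : ∀ c ∈ allC.erase c0, ∀ c' ∈ allC.erase c0, c ≠ c' →
      Disjoint (slotsOf c) (slotsOf c') := by
    intro c _ c' _ hne
    rw [Finset.disjoint_left]
    intro p hp hp'
    exact hne ((hmem_slotsOf c p hp).symm.trans (hmem_slotsOf c' p hp'))
  set Slots : Finset (ℕ × Bool) := (allC.erase c0).biUnion slotsOf with hSlots
  have hSlots_card : Slots.card = ∑ c ∈ allC.erase c0, s c :=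
    (Finset.card_biUnion hdisj).trans (Finset.sum_congr rfl fun c _ => hslotsOf_card c)
  have hmemSlots : ∀ p, p ∈ Slots ↔ p.1 ∈ allC.erase c0 ∧ p ∈ slotsOf p.1 := by
    intro p
    simp only [hSlots, mem_biUnion]
    constructor
    · rintro ⟨c, hc, hp⟩
      have := hmem_slotsOf c p hp
      subst this
      exact ⟨hc, hp⟩
    · rintro ⟨h1, h2⟩
      exact ⟨p.1, h1, h2⟩
  have hc0allC : c0 ∈ allC := hLusub hc0
  have hsum_erase : ∑ c ∈ allC.erase c0, et c + et c0 = (m + 1) * k := by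
    rw [← htotal]
    exact Finset.sum_erase_add allC et hc0allC
  have hsumle : ∑ c ∈ allC.erase c0, et c ≤ k * Slots.card := by
    rw [hSlots_card, Finset.mul_sum]
    exact Finset.sum_le_sum fun c _ => hks c
  have hmge : m ≤ Slots.card := by
    by_contra hcon
    push_neg at hcon
    have h1 : (m + 1) * k ≤ k * Slots.card + et c0 := by omega
    have h3 : k * Slots.card + k ≤ k * m :=
      calc k * Slots.card + k = k * (Slots.card + 1) := by ring
        _ ≤ k * m := Nat.mul_le_mul_left k hcon
    have h4 : et c0 ≤ m + 1 := hetle c0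
    have h5 : et c0 ≤ 2 * k - 1 := by omega
    have e : (m + 1) * k = k * m + k := by ring
    omega
  -- dummies and Hall
  set D : ℕ := Slots.card - m with hD
  set t : Fin m ⊕ Fin D → Finset (ℕ × Bool) :=
    Sum.elim (fun i => Slots.filter fun p => p.1 ∈ ll i ∧ p.1 ≠ c0)
      (fun _ => Slots.filter fun p => p.2 = true ∨ et p.1 < k) with ht
  have htsub : ∀ x, t x ⊆ Slots := by
    intro x; cases x <;> exact Finset.filter_subset _ _
  have hdisjall : ∀ (c c' : ℕ), c ≠ c' → Disjoint (slotsOf c) (slotsOf c') := by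
    intro c c' hne
    rw [Finset.disjoint_left]
    intro p hp hp'
    exact hne ((hmem_slotsOf c p hp).symm.trans (hmem_slotsOf c' p hp'))
  have hleafcard : ∀ C' : Finset ℕ, (C'.biUnion slotsOf).card = ∑ c ∈ C', s c := by
    intro C'
    exact (Finset.card_biUnion fun c _ c' _ h => hdisjall c c' h).trans
      (Finset.sum_congr rfl fun c _ => hslotsOf_card c)
  have hHall : ∀ sf : Finset (Fin m ⊕ Fin D), sf.card ≤ (sf.biUnion t).card := by
    intro sf
    set W : Finset (Fin m) := univ.filter (fun i => Sum.inl i ∈ sf) with hW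
    set Dd : Finset (Fin D) := univ.filter (fun d => Sum.inr d ∈ sf) with hDd
    have hWsf : ∀ i ∈ W, Sum.inl i ∈ sf := by
      intro i hi; exact (mem_filter.1 hi).2
    have hsfsub : sf ⊆ W.image Sum.inl ∪ Dd.image Sum.inr := by
      intro x hx
      cases x with
      | inl i => exact mem_union_left _ (mem_image_of_mem _ (by simp [hW, hx]))
      | inr d => exact mem_union_right _ (mem_image_of_mem _ (by simp [hDd, hx]))
    have hsfcard : sf.card ≤ W.card + Dd.card :=
      le_trans (Finset.card_le_card hsfsub)
        (le_trans (Finset.card_union_le _ _)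
          (add_le_add (Finset.card_image_le) (Finset.card_image_le)))
    have hleafbi : W.biUnion (fun i => Slots.filter fun p => p.1 ∈ ll i ∧ p.1 ≠ c0)
        = ((W.biUnion ll).erase c0).biUnion slotsOf := by
      ext p
      constructor
      · intro hp
        obtain ⟨i, hiW, hpi⟩ := mem_biUnion.1 hp
        rw [mem_filter] at hpi
        obtain ⟨hpS, hp1, hpne⟩ := hpi
        refine mem_biUnion.2 ⟨p.1, mem_erase.2 ⟨hpne, mem_biUnion.2 ⟨i, hiW, hp1⟩⟩, ?_⟩
        exact ((hmemSlots p).1 hpS).2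
      · intro hp
        obtain ⟨c, hc, hps⟩ := mem_biUnion.1 hp
        have hpc := hmem_slotsOf c p hps
        rw [mem_erase] at hc
        obtain ⟨hcne, hcW⟩ := hc
        obtain ⟨i, hiW, hci⟩ := mem_biUnion.1 hcW
        refine mem_biUnion.2 ⟨i, hiW, mem_filter.2 ⟨?_, ?_, ?_⟩⟩
        · exact (hmemSlots p).2 ⟨by rw [hpc]; exact mem_erase.2 ⟨hcne, hllsub i hci⟩,
            by rw [hpc]; exact hps⟩
        · rw [hpc]; exact hci
        · rw [hpc]; exact hcne
    rcases Finset.eq_empty_or_nonempty Dd with hDde | ⟨d, hd⟩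
    · -- no dummy
      have hsf2 : sf ⊆ W.image Sum.inl := by
        intro x hx
        cases x with
        | inl i => exact mem_image_of_mem _ (by simp [hW, hx])
        | inr d =>
          exfalso
          have : d ∈ Dd := by simp [hDd, hx]
          rw [hDde] at this
          exact absurd this (Finset.notMem_empty d)
      have h1 : sf.card ≤ W.card := le_trans (Finset.card_le_card hsf2) Finset.card_image_le
      have h2 : W.biUnion (fun i => Slots.filter fun p => p.1 ∈ ll i ∧ p.1 ≠ c0)
          ⊆ sf.biUnion t := by
        intro p hp
        obtain ⟨i, hiW, hpi⟩ := mem_biUnion.1 hp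
        exact mem_biUnion.2 ⟨Sum.inl i, hWsf i hiW, by simpa [ht] using hpi⟩
      have h3 : W.card ≤ (W.biUnion fun i => Slots.filter fun p => p.1 ∈ ll i ∧ p.1 ≠ c0).card := by
        rw [hleafbi, hleafcard]
        exact hH1 W
      exact le_trans h1 (le_trans h3 (Finset.card_le_card h2))
    · -- a dummy is present
      set CW := W.biUnion ll with hCW
      set Opt := Slots.filter (fun p => p.2 = true ∨ et p.1 < k) with hOpt
      set Mand := Slots.filter (fun p => ¬(p.2 = true ∨ et p.1 < k)) with hMand
      set MandW := Mand.filter (fun p => p.1 ∈ CW) with hMW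
      set MandM := Mand.filter (fun p => p.1 ∉ CW) with hMM
      have hself : Opt.card + Mand.card = Slots.card :=
        Finset.card_filter_add_card_filter_not _
      have hself2 : MandW.card + MandM.card = Mand.card :=
        Finset.card_filter_add_card_filter_not _
      have hdisjOM : Disjoint Opt MandW := by
        rw [Finset.disjoint_left]
        intro p hp hp'
        rw [hOpt, mem_filter] at hp
        rw [hMW, mem_filter, hMand, mem_filter] at hp'
        exact hp'.1.2 hp.2
      have hsubOM : Opt ∪ MandW ⊆ sf.biUnion t := by
        intro p hp
        rcases mem_union.1 hp with hp | hp
        · refine mem_biUnion.2 ⟨Sum.inr d, (mem_filter.1 hd).2, ?_⟩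
          simpa [ht, hOpt] using hp
        · rw [hMW, mem_filter, hMand, mem_filter] at hp
          obtain ⟨⟨hpS, hpnot⟩, hpCW⟩ := hp
          obtain ⟨i, hiW, hci⟩ := mem_biUnion.1 hpCW
          have hpne : p.1 ≠ c0 := (mem_erase.1 ((hmemSlots p).1 hpS).1).1
          refine mem_biUnion.2 ⟨Sum.inl i, hWsf i hiW, ?_⟩
          simp only [ht, Sum.elim_inl, mem_filter]
          exact ⟨hpS, hci, hpne⟩
      have hcount : Opt.card + MandW.card ≤ (sf.biUnion t).card := by
        rw [← Finset.card_union_of_disjoint hdisjOM]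
        exact Finset.card_le_card hsubOM
      -- (H2)
      set Hm := (allC.erase c0).filter (fun c => k ≤ et c ∧ c ∉ CW) with hHm
      have hMMeq : MandM = Hm.image (fun c => (c, false)) := by
        ext p
        rw [hMM, mem_filter, hMand, mem_filter]
        constructor
        · rintro ⟨⟨hpS, hpnot⟩, hpCW⟩
          push_neg at hpnot
          obtain ⟨hp2, hpk⟩ := hpnot
          have hp2' : p.2 = false := by
            cases hb : p.2
            · rfl
            · exact absurd hb hp2
          refine mem_image.2 ⟨p.1, ?_, ?_⟩
          · rw [hHm, mem_filter]
            exact ⟨((hmemSlots p).1 hpS).1, by omega, hpCW⟩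
          · exact Prod.ext rfl hp2'.symm
        · intro hp
          obtain ⟨c, hc, rfl⟩ := mem_image.1 hp
          rw [hHm, mem_filter] at hc
          obtain ⟨hc1, hc2, hc3⟩ := hc
          refine ⟨⟨(hmemSlots _).2 ⟨hc1, hfalse_mem c⟩, ?_⟩, hc3⟩
          simp only [not_or]
          constructor
          · simp
          · omega
      have hMMcard : MandM.card = Hm.card := by
        rw [hMMeq]
        exact Finset.card_image_of_injective _ (fun a b hab => by
          simpa using congrArg Prod.fst hab)
      have hWm : W.card ≤ m := by
        calc W.card ≤ (univ : Finset (Fin m)).card := Finset.card_le_card (Finset.subset_univ W)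
          _ = m := by simp
      have hH2 : Hm.card + W.card ≤ m := by
        have h1 : k * Hm.card ≤ ∑ c ∈ Hm, et c := by
          calc k * Hm.card = ∑ _c ∈ Hm, k := by rw [Finset.sum_const, smul_eq_mul, mul_comm]
            _ ≤ ∑ c ∈ Hm, et c :=
              Finset.sum_le_sum fun c hc => (mem_filter.1 hc).2.1
        have e1 : ∀ c ∈ Hm, et c
            = (if c ∈ Lu then 1 else 0) + ((univ \ W).filter fun i => c ∈ ll i).card := by
          intro c hc
          rw [het c]
          congr 1
          congr 1
          ext i
          simp only [mem_filter, mem_univ, true_and, Finset.mem_sdiff]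
          constructor
          · intro hi
            refine ⟨?_, hi⟩
            intro hiW
            exact (mem_filter.1 hc).2.2 (mem_biUnion.2 ⟨i, hiW, hi⟩)
          · exact fun hi => hi.2
        have h2 : ∑ c ∈ Hm, et c
            ≤ (k - 1) + ∑ c ∈ Hm, ((univ \ W).filter fun i => c ∈ ll i).card := by
          rw [Finset.sum_congr rfl e1, Finset.sum_add_distrib]
          refine add_le_add ?_ le_rfl
          rw [← Finset.card_filter]
          have hsub : Hm.filter (· ∈ Lu) ⊆ Lu.erase c0 := by
            intro c hc
            rw [mem_filter] at hc
            exact mem_erase.2 ⟨(mem_erase.1 (mem_filter.1 hc.1).1).1, hc.2⟩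
          calc (Hm.filter (· ∈ Lu)).card ≤ (Lu.erase c0).card := Finset.card_le_card hsub
            _ = k - 1 := by rw [Finset.card_erase_of_mem hc0, hLu]
        have h3 : ∑ c ∈ Hm, ((univ \ W).filter fun i => c ∈ ll i).card ≤ (m - W.card) * k := by
          rw [← sum_inter_card (univ \ W) Hm ll]
          calc ∑ i ∈ univ \ W, (ll i ∩ Hm).card ≤ ∑ i ∈ univ \ W, k :=
                Finset.sum_le_sum fun i _ =>
                  le_trans (Finset.card_le_card Finset.inter_subset_left) (le_of_eq (hll i))
            _ = (m - W.card) * k := by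
                rw [Finset.sum_const, smul_eq_mul]
                congr 1
                rw [Finset.card_sdiff_of_subset (Finset.subset_univ W)]
                simp
        by_contra hcon
        push_neg at hcon
        have h4 : m - W.card + 1 ≤ Hm.card := by omega
        have h5 : k * (m - W.card + 1) ≤ k * Hm.card := Nat.mul_le_mul_left k h4
        have e2 : k * (m - W.card + 1) = (m - W.card) * k + k := by ring
        omega
      have hDdle : Dd.card ≤ D := by
        calc Dd.card ≤ (univ : Finset (Fin D)).card := Finset.card_le_card (Finset.subset_univ Dd)
          _ = D := by simp
      omega
  -- apply Hall
  obtain ⟨F, Finj, hF⟩ := (Finset.all_card_le_biUnion_card_iff_exists_injective t).1 hHall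
  have hFS : ∀ x, F x ∈ Slots := fun x => htsub x (hF x)
  have hcardι : Fintype.card (Fin m ⊕ Fin D) = Slots.card := by
    simp only [Fintype.card_sum, Fintype.card_fin]
    omega
  have himage : univ.image F = Slots := by
    apply Finset.eq_of_subset_of_card_le
    · intro p hp
      obtain ⟨x, _, rfl⟩ := mem_image.1 hp
      exact hFS x
    · rw [Finset.card_image_of_injective _ Finj, Finset.card_univ, hcardι]
  refine ⟨fun i => (F (Sum.inl i)).1, ?_, ?_, ?_⟩
  · intro i
    have := hF (Sum.inl i)
    simp only [ht, Sum.elim_inl, mem_filter] at this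
    exact ⟨this.2.1, this.2.2⟩
  · intro c hc
    show _ ≤ s c
    rw [← hslotsOf_card c]
    apply Finset.card_le_card_of_injOn (fun i => F (Sum.inl i))
    · intro i hi
      rw [mem_coe, mem_filter] at hi
      have hS := hFS (Sum.inl i)
      have hmem2 := ((hmemSlots _).1 hS).2
      have h2 : (F (Sum.inl i)).1 = c := hi.2
      rwa [h2] at hmem2
    · intro a _ b _ hab
      exact Sum.inl.inj (Finj hab)
  · intro c hc hkc
    have hcall : c ∈ allC := (hmemallC c).2 (by omega)
    have hmem : (c, false) ∈ Slots := (hmemSlots _).2 ⟨mem_erase.2 ⟨hc, hcall⟩, hfalse_mem c⟩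
    rw [← himage] at hmem
    obtain ⟨x, -, hx⟩ := mem_image.1 hmem
    cases x with
    | inr d =>
      exfalso
      have := hF (Sum.inr d)
      rw [hx] at this
      simp only [ht, Sum.elim_inr, mem_filter] at this
      rcases this.2 with h | h
      · simp at h
      · omega
    | inl i =>
      refine Finset.card_pos.2 ⟨i, mem_filter.2 ⟨mem_univ i, ?_⟩⟩
      show (F (Sum.inl i)).1 = c
      rw [hx]

lemma exists_good_c0 (m k : ℕ) (hm : 0 < m) (hk : m + 2 ≤ 2 * k)
    (ll : Fin m → Finset ℕ) (Lu : Finset ℕ)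
    (hll : ∀ i, (ll i).card = k) (hLu : Lu.card = k)
    (et : ℕ → ℕ)
    (het : ∀ c, et c = (if c ∈ Lu then 1 else 0) + (univ.filter fun i => c ∈ ll i).card)
    (hetle : ∀ c, et c ≤ m + 1) :
    ∃ c0 ∈ Lu, ∀ W : Finset (Fin m),
      W.card ≤ ∑ c ∈ (W.biUnion ll).erase c0, (if k + 1 ≤ et c then 2 else 1) := by
  classical
  have hk2 : 2 ≤ k := by omega
  by_contra hcon
  push_neg at hcon
  choose! Wf hWf using hcon
  -- abbreviations
  set udeg : ℕ → ℕ := fun c => (univ.filter fun i => c ∈ ll i).card with hudeg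
  set A2 : ℕ → Finset ℕ :=
    fun c => (((Wf c).biUnion ll).erase c).filter (fun c' => k + 1 ≤ et c') with hA2
  have hdegle : ∀ (W : Finset (Fin m)) c', (W.filter fun i => c' ∈ ll i).card ≤ et c' := by
    intro W c'
    rw [het c']
    have h1 : W.filter (fun i => c' ∈ ll i) ⊆ univ.filter (fun i => c' ∈ ll i) :=
      Finset.filter_subset_filter _ (Finset.subset_univ W)
    have := Finset.card_le_card h1
    omega
  have key : ∀ c ∈ Lu, k + (A2 c).card ≤ ((Wf c).filter fun i => c ∈ ll i).card ∧
      ((Wf c).filter fun i => c ∈ ll i).card ≤ udeg c ∧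
      ((Wf c).filter fun i => c ∈ ll i).card ≤ (Wf c).card := by
    intro c hc
    set W := Wf c with hWdef
    set CW := W.biUnion ll with hCW
    set A := CW.erase c with hA
    have hfail : ∑ c' ∈ A, (if k + 1 ≤ et c' then 2 else 1) < W.card := hWf c hc
    set dg : ℕ → ℕ := fun c' => (W.filter fun i => c' ∈ ll i).card with hdg
    have e1 : W.card * k = ∑ c' ∈ CW, dg c' := by
      rw [← sum_inter_card W CW ll]
      have h1 : ∀ i ∈ W, (ll i ∩ CW).card = k := by
        intro i hi
        rw [Finset.inter_eq_left.2 (Finset.subset_biUnion_of_mem ll hi), hll i]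
      rw [Finset.sum_congr rfl h1, Finset.sum_const, smul_eq_mul]
    have hsub : CW ⊆ insert c A := Finset.subset_insert_iff.2 Finset.Subset.rfl
    have e2 : ∑ c' ∈ CW, dg c' ≤ dg c + ∑ c' ∈ A, dg c' := by
      calc ∑ c' ∈ CW, dg c' ≤ ∑ c' ∈ insert c A, dg c' :=
            Finset.sum_le_sum_of_subset hsub
        _ = dg c + ∑ c' ∈ A, dg c' := Finset.sum_insert (Finset.notMem_erase c CW)
    set a2 := (A.filter (fun c' => k + 1 ≤ et c')).card with ha2
    set a1 := (A.filter (fun c' => ¬(k + 1 ≤ et c'))).card with ha1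
    have e3 : ∑ c' ∈ A, dg c' ≤ a2 * (2 * k - 1) + a1 * k := by
      rw [← Finset.sum_filter_add_sum_filter_not A (fun c' => k + 1 ≤ et c')]
      refine add_le_add ?_ ?_
      · calc ∑ c' ∈ A.filter (fun c' => k + 1 ≤ et c'), dg c'
            ≤ ∑ _c' ∈ A.filter (fun c' => k + 1 ≤ et c'), (2 * k - 1) := by
              refine Finset.sum_le_sum fun c' _ => ?_
              have hdd : dg c' ≤ et c' := hdegle W c'
              have := hetle c'
              omega
          _ = a2 * (2 * k - 1) := by rw [Finset.sum_const, smul_eq_mul]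
      · calc ∑ c' ∈ A.filter (fun c' => ¬(k + 1 ≤ et c')), dg c'
            ≤ ∑ c'' ∈ A.filter (fun c' => ¬(k + 1 ≤ et c')), k := by
              refine Finset.sum_le_sum fun c' hc' => ?_
              have h1 := (Finset.mem_filter.1 hc').2
              have hdd : dg c' ≤ et c' := hdegle W c'
              omega
          _ = a1 * k := by rw [Finset.sum_const, smul_eq_mul]
    have e4 : ∑ c' ∈ A, (if k + 1 ≤ et c' then 2 else 1) = a2 * 2 + a1 := by
      rw [← Finset.sum_filter_add_sum_filter_not A (fun c' => k + 1 ≤ et c')]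
      congr 1
      · rw [Finset.sum_congr rfl (fun c' hc' => if_pos (Finset.mem_filter.1 hc').2),
          Finset.sum_const, smul_eq_mul, mul_comm]
      · rw [Finset.sum_congr rfl (fun c' hc' => if_neg (Finset.mem_filter.1 hc').2),
          Finset.sum_const, smul_eq_mul, mul_one]
    have hWa : a2 * 2 + a1 + 1 ≤ W.card := by omega
    have h5 : (a2 * 2 + a1 + 1) * k ≤ W.card * k := Nat.mul_le_mul_right k hWa
    have e5 : (a2 * 2 + a1 + 1) * k = 2 * (a2 * k) + a1 * k + k := by ring
    have e6 : a2 * (2 * k - 1) + a2 = 2 * (a2 * k) := by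
      have : 2 * k - 1 + 1 = 2 * k := by omega
      calc a2 * (2 * k - 1) + a2 = a2 * (2 * k - 1 + 1) := by ring
        _ = 2 * (a2 * k) := by rw [this]; ring
    have hcore : k + a2 ≤ dg c := by omega
    refine ⟨?_, ?_, ?_⟩
    · exact hcore
    · have h1 : W.filter (fun i => c ∈ ll i) ⊆ univ.filter (fun i => c ∈ ll i) :=
        Finset.filter_subset_filter _ (Finset.subset_univ W)
      exact Finset.card_le_card h1
    · exact Finset.card_le_card (Finset.filter_subset _ _)
  have hLuge : ∀ c ∈ Lu, k + 1 ≤ et c := by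
    intro c hc
    obtain ⟨h1, h2, _⟩ := key c hc
    rw [het c, if_pos hc]
    have : udeg c = (univ.filter fun i => c ∈ ll i).card := rfl
    omega
  have hLune : Lu.Nonempty := by
    rw [← Finset.card_pos, hLu]; omega
  obtain ⟨cm, hcm, hmin⟩ := Finset.exists_min_image Lu (fun c => (A2 c).card) hLune
  set a := (A2 cm).card with ha
  set W := Wf cm with hW
  set w := W.card with hw
  -- facts
  obtain ⟨k1, k2, k3⟩ := key cm hcm
  have hkw : k + a ≤ w := le_trans k1 k3
  have hwm : w ≤ m := by
    calc w ≤ (univ : Finset (Fin m)).card := Finset.card_le_card (Finset.subset_univ W)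
      _ = m := by simp
  -- global double count
  set S := ∑ i : Fin m, (ll i ∩ Lu).card with hS
  have hSlow : k * (k + a) ≤ S := by
    have h1 : S = ∑ c ∈ Lu, udeg c := sum_inter_card univ Lu ll
    have h2 : ∀ c ∈ Lu, k + a ≤ udeg c := by
      intro c hc
      obtain ⟨j1, j2, _⟩ := key c hc
      have := hmin c hc
      omega
    calc k * (k + a) = ∑ _c ∈ Lu, (k + a) := by
          rw [Finset.sum_const, smul_eq_mul, hLu]
      _ ≤ ∑ c ∈ Lu, udeg c := Finset.sum_le_sum h2
      _ = S := h1.symm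
  have hSup : S ≤ w * (1 + a) + (m - w) * k := by
    have hsplit : S = ∑ i ∈ W, (ll i ∩ Lu).card + ∑ i ∈ univ \ W, (ll i ∩ Lu).card := by
      rw [hS, ← Finset.sum_sdiff (Finset.subset_univ W)]
      ring
    have hin : ∀ i ∈ W, (ll i ∩ Lu).card ≤ 1 + a := by
      intro i hi
      have hsub2 : ll i ∩ Lu ⊆ insert cm (A2 cm) := by
        intro c' hc'
        rw [Finset.mem_inter] at hc'
        by_cases hcc : c' = cm
        · rw [hcc]; exact Finset.mem_insert_self _ _
        · refine Finset.mem_insert_of_mem ?_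
          rw [hA2]
          refine Finset.mem_filter.2 ⟨Finset.mem_erase.2 ⟨hcc, ?_⟩, hLuge c' hc'.2⟩
          exact Finset.mem_biUnion.2 ⟨i, hi, hc'.1⟩
      calc (ll i ∩ Lu).card ≤ (insert cm (A2 cm)).card := Finset.card_le_card hsub2
        _ ≤ a + 1 := Finset.card_insert_le _ _
        _ = 1 + a := by ring
    have hout : ∀ i ∈ univ \ W, (ll i ∩ Lu).card ≤ k := by
      intro i _
      calc (ll i ∩ Lu).card ≤ Lu.card := Finset.card_le_card Finset.inter_subset_right
        _ = k := hLu
    calc S = ∑ i ∈ W, (ll i ∩ Lu).card + ∑ i ∈ univ \ W, (ll i ∩ Lu).card := hsplit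
      _ ≤ ∑ _i ∈ W, (1 + a) + ∑ _i ∈ univ \ W, k :=
          add_le_add (Finset.sum_le_sum hin) (Finset.sum_le_sum hout)
      _ = w * (1 + a) + (m - w) * k := by
          rw [Finset.sum_const, Finset.sum_const, smul_eq_mul, smul_eq_mul,
            Finset.card_sdiff_of_subset (Finset.subset_univ W)]
          simp [hw]
  -- contradiction
  obtain ⟨q, hq⟩ : ∃ q, m = w + q := ⟨m - w, by omega⟩
  have hak : a + 2 ≤ k := by omega
  have hmw : (m - w) = q := by omega
  rw [hmw] at hSup
  have h2k : w + q + 2 ≤ 2 * k := by omega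
  have hfinal : ¬ (k * (k + a) ≤ w * (1 + a) + q * k) := by
    intro hle
    zify at hle hkw h2k hak
    nlinarith [hle, hkw, h2k, hak, mul_le_mul_of_nonneg_right hkw (by linarith : (0:ℤ) ≤ k - 1 - a)]
  exact hfinal (le_trans hSlow hSup)

lemma star_not_choosable (m k : ℕ) (hm : 0 < m) (hk : 2 * k ≤ m + 1) :
    ¬ ProportionallyChoosable (completeBipartiteGraph (Fin 1) (Fin m)) k := by
  intro h
  obtain ⟨f, h1, h2, h3⟩ := h (fun _ => Finset.range k) (fun _ => Finset.card_range k)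
  rcases Nat.eq_zero_or_pos k with hk0 | hk0
  · have := h1 (Sum.inl 0); simp [hk0] at this
  set c0 := f (Sum.inl 0) with hc0
  have hmem : c0 ∈ Finset.range k := h1 (Sum.inl 0)
  have hfilter : (Finset.univ.filter fun v : Fin 1 ⊕ Fin m => f v = c0) = {Sum.inl 0} := by
    ext v
    simp only [Finset.mem_filter, Finset.mem_univ, true_and, Finset.mem_singleton]
    constructor
    · intro hv
      cases v with
      | inl a => simp [Fin.fin_one_eq_zero a]
      | inr i =>
        exfalso
        exact h2 (Sum.inl 0) (Sum.inr i) (by simp) (by rw [← hc0, hv])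
    · rintro rfl; rfl
  have heta : eta (fun _ : Fin 1 ⊕ Fin m => Finset.range k) c0 = m + 1 := by
    unfold eta
    rw [Finset.filter_true_of_mem (fun v _ => hmem)]
    simp [Fintype.card_sum]
    omega
  have := h3 c0 ⟨Sum.inl 0, hmem⟩
  rw [hfilter, heta] at this
  simp only [Finset.card_singleton] at this
  have hd1 : 2 ≤ (m + 1) / k := by
    rw [Nat.le_div_iff_mul_le hk0]; omega
  have hd2 : (m + 1) / k ≤ (m + 1 + k - 1) / k := Nat.div_le_div_right (by omega)
  omega

lemma star_choosable (m k : ℕ) (hm : 0 < m) (hk : m + 2 ≤ 2 * k) :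
    ProportionallyChoosable (completeBipartiteGraph (Fin 1) (Fin m)) k := by
  classical
  intro L hL
  have hk2 : 2 ≤ k := by omega
  set ll : Fin m → Finset ℕ := fun i => L (Sum.inr i) with hlldef
  set Lu : Finset ℕ := L (Sum.inl 0) with hLudef
  set et : ℕ → ℕ := fun c => eta L c with hetdef
  have hLa : ∀ a : Fin 1, L (Sum.inl a) = Lu := by
    intro a
    have : a = 0 := Subsingleton.elim a 0
    rw [this]
  have hsplitcard : ∀ (p : Fin 1 ⊕ Fin m → Prop) (_ : DecidablePred p),
      (univ.filter p).card
        = (if p (Sum.inl 0) then 1 else 0) + (univ.filter fun i => p (Sum.inr i)).card := by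
    intro p hp
    rw [Finset.card_filter, Fintype.sum_sum_type, Fin.sum_univ_one, Finset.card_filter]
  have het : ∀ c, et c = (if c ∈ Lu then 1 else 0) + (univ.filter fun i => c ∈ ll i).card := by
    intro c
    show eta L c = _
    rw [eta]
    exact hsplitcard (fun v => c ∈ L v) _
  have hetle : ∀ c, et c ≤ m + 1 := by
    intro c
    show eta L c ≤ m + 1
    calc (Finset.univ.filter fun v => c ∈ L v).card ≤ (univ : Finset (Fin 1 ⊕ Fin m)).card :=
          Finset.card_le_card (Finset.filter_subset _ _)
      _ = m + 1 := by simp [Fintype.card_sum]; omega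
  obtain ⟨c0, hc0, hH1⟩ := exists_good_c0 m k hm hk ll Lu (fun i => hL _) (hL _) et het hetle
  obtain ⟨h, hh1, hh2, hh3⟩ :=
    exists_leaf_assignment m k hm hk ll Lu (fun i => hL _) (hL _) et het hetle c0 hc0 hH1
  refine ⟨Sum.elim (fun _ => c0) h, ?_, ?_, ?_⟩
  · intro v
    cases v with
    | inl a => rw [hLa a]; exact hc0
    | inr i => exact (hh1 i).1
  · intro x y hadj
    cases x with
    | inl a =>
      cases y with
      | inl b => simp at hadj
      | inr j =>
        simp only [Sum.elim_inl, Sum.elim_inr]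
        exact fun hcc => (hh1 j).2 hcc.symm
    | inr i =>
      cases y with
      | inl b =>
        simp only [Sum.elim_inl, Sum.elim_inr]
        exact (hh1 i).2
      | inr j => simp at hadj
  · intro c hex
    have hc1 : 1 ≤ et c := by
      obtain ⟨v, hv⟩ := hex
      have hv' : v ∈ univ.filter (fun v => c ∈ L v) := by simp [hv]
      exact Finset.card_pos.2 ⟨v, hv'⟩
    have hup : et c ≤ 2 * k - 1 := by have := hetle c; omega
    have hdiv1 : ∀ a b : ℕ, 0 < b → b ≤ a → a < 2 * b → a / b = 1 := by
      intro a b hb h1 h2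
      refine Nat.div_eq_of_lt_le (by omega) (by omega)
    have hdiv2 : ∀ a b : ℕ, 0 < b → 2 * b ≤ a → a < 3 * b → a / b = 2 := by
      intro a b hb h1 h2
      refine Nat.div_eq_of_lt_le (by omega) (by omega)
    have husage : (univ.filter fun v : Fin 1 ⊕ Fin m => Sum.elim (fun _ => c0) h v = c).card
        = (if c0 = c then 1 else 0) + (univ.filter fun i => h i = c).card := by
      exact hsplitcard (fun v => Sum.elim (fun _ => c0) h v = c) _
    rw [husage]
    show _ = eta L c / k ∨ _ = (eta L c + k - 1) / k
    have hetc : eta L c = et c := rfl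
    rw [hetc]
    by_cases hcc : c = c0
    · subst hcc
      have hzero : (univ.filter fun i => h i = c).card = 0 := by
        rw [Finset.card_eq_zero]
        ext i
        simp only [mem_filter, mem_univ, true_and, Finset.notMem_empty, iff_false]
        exact (hh1 i).2
      rw [if_pos rfl, hzero]
      by_cases hbig : k + 1 ≤ et c
      · left
        rw [hdiv1 (et c) k (by omega) (by omega) (by omega)]
      · right
        rw [hdiv1 (et c + k - 1) k (by omega) (by omega) (by omega)]
    · rw [if_neg (fun hcc' => hcc hcc'.symm), zero_add]
      have hU2 := hh2 c hcc
      by_cases hbig : k + 1 ≤ et c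
      · rw [if_pos hbig] at hU2
        have hU1 := hh3 c hcc (by omega)
        interval_cases hU : (univ.filter fun i => h i = c).card
        · left; rw [hdiv1 (et c) k (by omega) (by omega) (by omega)]
        · right; rw [hdiv2 (et c + k - 1) k (by omega) (by omega) (by omega)]
      · rw [if_neg hbig] at hU2
        by_cases hmid : k ≤ et c
        · have hU1 := hh3 c hcc hmid
          have hUeq : (univ.filter fun i => h i = c).card = 1 := by omega
          left
          rw [hUeq, hdiv1 (et c) k (by omega) (by omega) (by omega)]
        · rcases Nat.lt_or_ge (univ.filter fun i => h i = c).card 1 with hU | hU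
          · left
            rw [Nat.div_eq_of_lt (by omega)]
            omega
          · right
            have hUeq : (univ.filter fun i => h i = c).card = 1 := by omega
            rw [hUeq, hdiv1 (et c + k - 1) k (by omega) (by omega) (by omega)]

theorem stmt_19 (m : ℕ) (hm : 0 < m) :
    propChoiceNumber (completeBipartiteGraph (Fin 1) (Fin m)) = 1 + (m + 1) / 2 := by
  have hmem : ProportionallyChoosable (completeBipartiteGraph (Fin 1) (Fin m)) (1 + (m + 1) / 2) :=
    star_choosable m _ hm (by omega)
  refine le_antisymm (Nat.sInf_le hmem) (le_csInf ⟨_, hmem⟩ ?_)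
  intro j hj
  by_contra hlt
  exact star_not_choosable m j hm (by omega) hj
end
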